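/- arXiv:1912.09375 — 8 statements merged into one kernel-verified Lean document; each statement's English description precedes it below -/
import Mathlib

section
/- Let n ≥ 1, let h_1 > h_2 > ... > h_{2n} be integers, and let v_1 ≥ v_2 ≥ ... ≥ v_{2n} be real numbers satisfying the pairing condition and the Newton-above-Hodge condition. If I ⊆ {1,...,2n} is a subset of cardinality n which is non-critical slope, i.e. Σ_{i∈I} v_i − Σ_{i=n+1}^{2n} h_i < h_n − h_{n+1}, then I = {n+1, n+2, ..., 2n} or I = {n, n+2, n+3, ..., 2n}. In particular, there are at most two non-critical slope subsets of cardinality n. -/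
open Finset

/-- Let `n ≥ 1`, let `h 1 > h 2 > ... > h (2n)` be integers (Hodge–Tate
weights) and `v 1 ≥ v 2 ≥ ... ≥ v (2n)` real numbers (valuations of Satake parameters)
satisfying the pairing condition and the Newton-above-Hodge condition.  If
`I ⊆ {1, ..., 2n}` has cardinality `n` and is non-critical slope, i.e.
`∑_{i ∈ I} v i − ∑_{i = n+1}^{2n} h i < h n − h (n+1)`, then
`I = {n+1, ..., 2n}` or `I = {n} ∪ {n+2, ..., 2n}`.  In particular there are at most two
non-critical slope subsets of cardinality `n`. -/
theorem at_most_two_non_critical_slope_stabilisations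
    (n : ℕ) (hn : 1 ≤ n) (h : ℕ → ℤ) (v : ℕ → ℝ)
    (hdec : ∀ i, 1 ≤ i → i < 2 * n → h (i + 1) < h i)
    (vdec : ∀ i, 1 ≤ i → i < 2 * n → v (i + 1) ≤ v i)
    (pairing : ∀ i, 1 ≤ i → i ≤ n →
      v i + v (2 * n + 1 - i) = (h i : ℝ) + (h (2 * n + 1 - i) : ℝ))
    (newton_above_hodge : ∀ j, 1 ≤ j → j ≤ 2 * n →
      ∑ i ∈ Icc 1 j, (h (2 * n + 1 - i) : ℝ) ≤ ∑ i ∈ Icc 1 j, v (2 * n + 1 - i))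
    (endpoints : ∑ i ∈ Icc 1 (2 * n), v (2 * n + 1 - i)
      = ∑ i ∈ Icc 1 (2 * n), (h (2 * n + 1 - i) : ℝ))
    (I : Finset ℕ) (hI : I ⊆ Icc 1 (2 * n)) (hcard : I.card = n)
    (hncs : ∑ i ∈ I, v i - ∑ i ∈ Icc (n + 1) (2 * n), (h i : ℝ)
      < (h n : ℝ) - (h (n + 1) : ℝ)) :
    I = Icc (n + 1) (2 * n) ∨ I = insert n (Icc (n + 2) (2 * n)) := by
  rcases eq_or_lt_of_le hn with h1 | h2
  · -- n = 1 : every 1-element subset of {1,2} is one of the two options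
    subst h1
    obtain ⟨x, hx⟩ := Finset.card_eq_one.mp hcard
    subst hx
    have hx2 : x ∈ Icc 1 (2 * 1) := hI (Finset.mem_singleton_self x)
    rw [Finset.mem_Icc] at hx2
    have : x = 1 ∨ x = 2 := by omega
    rcases this with h1 | h1
    · right; ext y
      simp only [Finset.mem_singleton, Finset.mem_insert, Finset.mem_Icc, h1]
      omega
    · left; ext y
      simp only [Finset.mem_singleton, Finset.mem_Icc, h1]
      omega
  -- now n ≥ 2
  by_contra hcon
  push_neg at hcon
  obtain ⟨hJne, hJ'ne⟩ := hcon
  -- v is antitone on [1, 2n]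
  have vmono : ∀ j, j ≤ 2 * n → ∀ i, 1 ≤ i → i ≤ j → v j ≤ v i := by
    intro j
    induction j with
    | zero => intro _ i hi hij; omega
    | succ k ih =>
      intro hk i hi hij
      rcases Nat.eq_or_lt_of_le hij with he | hl
      · exact le_of_eq (by rw [he])
      · have h1k : 1 ≤ k := by omega
        exact (vdec k h1k (by omega)).trans (ih (by omega) i hi (by omega))
  -- Newton above Hodge, rewritten for upper tails
  have newton' : ∀ k, 1 ≤ k → (0 : ℝ) ≤ ∑ i ∈ Icc k (2 * n), (v i - (h i : ℝ)) := by
    intro k hk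
    by_cases hk2 : 2 * n < k
    · rw [Finset.Icc_eq_empty (by omega)]; simp
    · push_neg at hk2
      have hj := newton_above_hodge (2 * n + 1 - k) (by omega) (by omega)
      have key : ∑ i ∈ Icc 1 (2 * n + 1 - k), (v (2 * n + 1 - i) - (h (2 * n + 1 - i) : ℝ))
          = ∑ i ∈ Icc k (2 * n), (v i - (h i : ℝ)) := by
        refine Finset.sum_nbij' (fun i => 2 * n + 1 - i) (fun i => 2 * n + 1 - i) ?_ ?_ ?_ ?_ ?_
        · intro a ha
          simp only [Finset.mem_Icc] at ha ⊢
          omega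
        · intro a ha
          simp only [Finset.mem_Icc] at ha ⊢
          omega
        · intro a ha
          simp only [Finset.mem_Icc] at ha
          show 2 * n + 1 - (2 * n + 1 - a) = a
          omega
        · intro a ha
          simp only [Finset.mem_Icc] at ha
          show 2 * n + 1 - (2 * n + 1 - a) = a
          omega
        · intro a ha; rfl
      rw [← key, Finset.sum_sub_distrib]
      exact sub_nonneg.mpr hj
  have hG3 : (0 : ℝ) ≤ ∑ i ∈ Icc (n + 3) (2 * n), (v i - (h i : ℝ)) :=
    newton' (n + 3) (by omega)
  -- introduce J and the decomposition sets
  set J : Finset ℕ := Icc (n + 1) (2 * n) with hJdef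
  have hsplit : ∑ i ∈ J, (v i - (h i : ℝ))
      = (v (n + 1) - (h (n + 1) : ℝ)) + ((v (n + 2) - (h (n + 2) : ℝ))
        + ∑ i ∈ Icc (n + 3) (2 * n), (v i - (h i : ℝ))) := by
    rw [hJdef, show Icc (n + 1) (2 * n) = insert (n + 1) (insert (n + 2) (Icc (n + 3) (2 * n))) by
      ext x; simp only [Finset.mem_Icc, Finset.mem_insert]; omega]
    rw [Finset.sum_insert (by simp only [Finset.mem_insert, Finset.mem_Icc]; omega),
      Finset.sum_insert (by simp only [Finset.mem_Icc]; omega)]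
  have hDG : (v (n + 1) - (h (n + 1) : ℝ)) + (v (n + 2) - (h (n + 2) : ℝ))
      ≤ ∑ i ∈ J, (v i - (h i : ℝ)) := by
    rw [hsplit]; linarith
  -- pairing instances
  have P2 : v n + v (n + 1) = (h n : ℝ) + (h (n + 1) : ℝ) := by
    have := pairing n (by omega) le_rfl
    rwa [show 2 * n + 1 - n = n + 1 by omega] at this
  have P1 : v (n - 1) + v (n + 2) = (h (n - 1) : ℝ) + (h (n + 2) : ℝ) := by
    have := pairing (n - 1) (by omega) (by omega)
    rwa [show 2 * n + 1 - (n - 1) = n + 2 by omega] at this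
  -- gaps of h
  have hg1 : (h n : ℝ) + 1 ≤ (h (n - 1) : ℝ) := by
    have h0 := hdec (n - 1) (by omega) (by omega)
    rw [show n - 1 + 1 = n by omega] at h0
    have : h n + 1 ≤ h (n - 1) := by omega
    exact_mod_cast this
  have hg2 : (h (n + 2) : ℝ) + 1 ≤ (h (n + 1) : ℝ) := by
    have h0 := hdec (n + 1) (by omega) (by omega)
    rw [show n + 1 + 1 = n + 2 by omega] at h0
    have : h (n + 2) + 1 ≤ h (n + 1) := by omega
    exact_mod_cast this
  -- v monotonicity instances
  have w1 : v n ≤ v (n - 1) := vmono n (by omega) (n - 1) (by omega) (by omega)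
  have w2 : v (n + 1) ≤ v n := vmono (n + 1) (by omega) n (by omega) (by omega)
  have w3 : v (n + 2) ≤ v (n + 1) := vmono (n + 2) (by omega) (n + 1) (by omega) (by omega)
  set A : Finset ℕ := I \ J with hAdef
  set B : Finset ℕ := J \ I with hBdef
  have hJcard : J.card = n := by rw [hJdef, Nat.card_Icc]; omega
  have hAbound : ∀ a ∈ A, 1 ≤ a ∧ a ≤ n := by
    intro a ha
    rw [hAdef, Finset.mem_sdiff, hJdef, Finset.mem_Icc] at ha
    have := hI ha.1
    rw [Finset.mem_Icc] at this
    omega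
  have hBbound : ∀ b ∈ B, n + 1 ≤ b ∧ b ≤ 2 * n := by
    intro b hb
    rw [hBdef, Finset.mem_sdiff, hJdef, Finset.mem_Icc] at hb
    omega
  have hABcard : A.card = B.card := by
    have h1 := Finset.card_inter_add_card_sdiff I J
    have h2 := Finset.card_inter_add_card_sdiff J I
    rw [Finset.inter_comm J I] at h2
    rw [← hAdef] at h1
    rw [← hBdef] at h2
    omega
  have sumI : ∑ i ∈ I, v i = ∑ i ∈ I ∩ J, v i + ∑ i ∈ A, v i := by
    rw [← Finset.sum_inter_add_sum_sdiff I J v, hAdef]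
  have sumJ : ∑ i ∈ J, v i = ∑ i ∈ I ∩ J, v i + ∑ i ∈ B, v i := by
    rw [← Finset.sum_inter_add_sum_sdiff J I v, Finset.inter_comm, hBdef]
  have sumJvh : ∑ i ∈ J, v i - ∑ i ∈ J, (h i : ℝ) = ∑ i ∈ J, (v i - (h i : ℝ)) := by
    rw [Finset.sum_sub_distrib]
  -- the key inequality kills non-critical slope
  have main : ((h n : ℝ) - (h (n + 1) : ℝ)
      ≤ ∑ a ∈ A, v a - ∑ b ∈ B, v b + ∑ i ∈ J, (v i - (h i : ℝ))) → False := by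
    intro key
    have e : ∑ i ∈ I, v i - ∑ i ∈ J, (h i : ℝ)
        = ∑ a ∈ A, v a - ∑ b ∈ B, v b + ∑ i ∈ J, (v i - (h i : ℝ)) := by
      rw [← sumJvh, sumI, sumJ]; ring
    rw [e] at hncs
    linarith
  -- case analysis on |A|
  rcases Nat.lt_or_ge A.card 2 with hAlt | hAge
  · rcases Nat.lt_or_ge A.card 1 with hA0 | hA1
    · -- A empty : I = J
      have hA : A = ∅ := Finset.card_eq_zero.mp (by omega)
      have : I ⊆ J := by
        intro x hx
        by_contra hxJ
        have : x ∈ A := by rw [hAdef, Finset.mem_sdiff]; exact ⟨hx, hxJ⟩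
        rw [hA] at this; exact absurd this (Finset.notMem_empty x)
      exact hJne (Finset.eq_of_subset_of_card_le this (by omega))
    · -- |A| = 1
      have hA1' : A.card = 1 := by omega
      obtain ⟨a, hAa⟩ := Finset.card_eq_one.mp hA1'
      obtain ⟨b, hBb⟩ := Finset.card_eq_one.mp (by omega : B.card = 1)
      have ha : 1 ≤ a ∧ a ≤ n := hAbound a (by rw [hAa]; exact Finset.mem_singleton_self a)
      have hb : n + 1 ≤ b ∧ b ≤ 2 * n := hBbound b (by rw [hBb]; exact Finset.mem_singleton_self b)
      have hSA : ∑ x ∈ A, v x = v a := by rw [hAa, Finset.sum_singleton]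
      have hSB : ∑ x ∈ B, v x = v b := by rw [hBb, Finset.sum_singleton]
      by_cases hex : a = n ∧ b = n + 1
      · -- exceptional case : I = insert n (Icc (n+2) (2n))
        apply hJ'ne
        obtain ⟨han, hbn⟩ := hex
        have hnI : n ∈ I := by
          have hA' : a ∈ A := by rw [hAa]; exact Finset.mem_singleton_self a
          rw [hAdef, Finset.mem_sdiff] at hA'
          rw [← han]; exact hA'.1
        have hn1I : n + 1 ∉ I := by
          have hB' : b ∈ B := by rw [hBb]; exact Finset.mem_singleton_self b
          rw [hBdef, Finset.mem_sdiff] at hB'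
          rw [← hbn]; exact hB'.2
        ext x
        simp only [Finset.mem_insert, Finset.mem_Icc]
        constructor
        · intro hx
          have hx12 : 1 ≤ x ∧ x ≤ 2 * n := by
            have := hI hx; rwa [Finset.mem_Icc] at this
          by_cases hxJ : x ∈ J
          · right
            rw [hJdef, Finset.mem_Icc] at hxJ
            have hxne : x ≠ n + 1 := fun he => hn1I (he ▸ hx)
            omega
          · left
            have hxA : x ∈ A := by rw [hAdef, Finset.mem_sdiff]; exact ⟨hx, hxJ⟩
            rw [hAa, Finset.mem_singleton] at hxA
            omega
        · intro hx
          rcases hx with he | hx2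
          · rw [he]; exact hnI
          · by_contra hxI
            have hxB : x ∈ B := by
              rw [hBdef, Finset.mem_sdiff, hJdef, Finset.mem_Icc]
              exact ⟨by omega, hxI⟩
            rw [hBb, Finset.mem_singleton] at hxB
            omega
      · -- non-exceptional : derive contradiction via the inequality
        apply main
        rw [hSA, hSB]
        rcases Nat.lt_or_ge a n with halt | hage
        · -- a ≤ n - 1
          have wa : v (n - 1) ≤ v a := vmono (n - 1) (by omega) a (by omega) (by omega)
          have wb : v b ≤ v (n + 1) := vmono b (by omega) (n + 1) (by omega) (by omega)
          linarith [hDG, P1, hg1, hg2]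
        · -- a = n, so b ≥ n + 2
          have han : a = n := by omega
          have hbn : n + 2 ≤ b := by
            rcases Nat.lt_or_ge b (n + 2) with hb2 | hb2
            · exact absurd ⟨han, by omega⟩ hex
            · exact hb2
          have wb : v b ≤ v (n + 2) := vmono b (by omega) (n + 2) (by omega) (by omega)
          rw [han]
          linarith [hDG, P2, hg2]
  · -- |A| ≥ 2
    apply main
    obtain ⟨a₁, ha₁, a₂, ha₂, hane⟩ := Finset.one_lt_card.mp (by omega : 1 < A.card)
    obtain ⟨b₁, hb₁, b₂, hb₂, hbne⟩ := Finset.one_lt_card.mp (by omega : 1 < B.card)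
    -- order them
    wlog hao : a₁ < a₂ generalizing a₁ a₂
    · exact this a₂ ha₂ a₁ ha₁ hane.symm (by omega)
    wlog hbo : b₁ < b₂ generalizing b₁ b₂
    · exact this b₂ hb₂ b₁ hb₁ hbne.symm (by omega)
    have ha₁b := hAbound a₁ ha₁
    have ha₂b := hAbound a₂ ha₂
    have hb₁b := hBbound b₁ hb₁
    have hb₂b := hBbound b₂ hb₂
    -- sums split off the two designated elements
    have ha₂' : a₂ ∈ A.erase a₁ := Finset.mem_erase.mpr ⟨hane.symm, ha₂⟩
    have hb₂' : b₂ ∈ B.erase b₁ := Finset.mem_erase.mpr ⟨hbne.symm, hb₂⟩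
    have hSA : ∑ x ∈ A, v x = v a₁ + (v a₂ + ∑ x ∈ (A.erase a₁).erase a₂, v x) := by
      rw [Finset.add_sum_erase _ _ ha₂', Finset.add_sum_erase _ _ ha₁]
    have hSB : ∑ x ∈ B, v x = v b₁ + (v b₂ + ∑ x ∈ (B.erase b₁).erase b₂, v x) := by
      rw [Finset.add_sum_erase _ _ hb₂', Finset.add_sum_erase _ _ hb₁]
    -- remaining sums comparison
    have hcardA'' : ((A.erase a₁).erase a₂).card = A.card - 2 := by
      rw [Finset.card_erase_of_mem ha₂', Finset.card_erase_of_mem ha₁]; omega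
    have hcardB'' : ((B.erase b₁).erase b₂).card = B.card - 2 := by
      rw [Finset.card_erase_of_mem hb₂', Finset.card_erase_of_mem hb₁]; omega
    have hA''le : (((A.erase a₁).erase a₂).card : ℝ) * v (n + 1)
        ≤ ∑ x ∈ (A.erase a₁).erase a₂, v x := by
      have := Finset.card_nsmul_le_sum ((A.erase a₁).erase a₂) v (v (n + 1)) ?_
      · rwa [nsmul_eq_mul] at this
      · intro x hx
        have hxA : x ∈ A := Finset.mem_of_mem_erase (Finset.mem_of_mem_erase hx)
        have := hAbound x hxA
        exact vmono (n + 1) (by omega) x (by omega) (by omega)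
    have hB''le : ∑ x ∈ (B.erase b₁).erase b₂, v x
        ≤ (((B.erase b₁).erase b₂).card : ℝ) * v (n + 1) := by
      have := Finset.sum_le_card_nsmul ((B.erase b₁).erase b₂) v (v (n + 1)) ?_
      · rwa [nsmul_eq_mul] at this
      · intro x hx
        have hxB : x ∈ B := Finset.mem_of_mem_erase (Finset.mem_of_mem_erase hx)
        have := hBbound x hxB
        exact vmono x (by omega) (n + 1) (by omega) (by omega)
    have hcc : (((A.erase a₁).erase a₂).card : ℝ) = (((B.erase b₁).erase b₂).card : ℝ) := by
      rw [hcardA'', hcardB'', hABcard]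
    rw [hcc] at hA''le
    -- pointwise bounds on the designated elements
    have wa₁ : v (n - 1) ≤ v a₁ := vmono (n - 1) (by omega) a₁ (by omega) (by omega)
    have wa₂ : v n ≤ v a₂ := vmono n (by omega) a₂ (by omega) (by omega)
    have wb₁ : v b₁ ≤ v (n + 1) := vmono b₁ (by omega) (n + 1) (by omega) (by omega)
    have wb₂ : v b₂ ≤ v (n + 2) := vmono b₂ (by omega) (n + 2) (by omega) (by omega)
    rw [hSA, hSB]
    linarith [hDG, P1, P2, hg1, hg2, w1, w2, w3, hA''le, hB''le]
end

section
/- Let n ≥ 1, let h_1 > h_2 > ... > h_{2n} be integers, and let v_1 ≥ v_2 ≥ ... ≥ v_{2n} be real numbers satisfying the pairing condition and the Newton-above-Hodge condition. If I ⊆ {1,...,2n} is a non-critical slope subset of cardinality n, then I is of Shalika type, i.e. for every 1 ≤ i ≤ n the set I contains exactly one element of the pair {i, 2n+1−i}. -/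
open Finset


lemma aux_sum_bottom_le (v : ℕ → ℝ) :
    ∀ (m M : ℕ) (K : Finset ℕ),
      (∀ i j, 1 ≤ i → i ≤ j → j ≤ M → v j ≤ v i) →
      K ⊆ Icc 1 M → K.card = m →
      ∑ j ∈ Icc (M - m + 1) M, v j ≤ ∑ j ∈ K, v j := by
  intro m
  induction m with
  | zero =>
    intro M K _ _ hcard
    have : K = ∅ := Finset.card_eq_zero.mp hcard
    subst this
    rw [show M - 0 + 1 = M + 1 from by omega, Finset.Icc_eq_empty (by omega)]
  | succ m ih =>
    intro M K hv hsub hcard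
    have hne : K.Nonempty := Finset.card_pos.mp (by omega)
    set t := K.max' hne with ht
    have htK : t ∈ K := K.max'_mem hne
    have htIcc := hsub htK
    rw [mem_Icc] at htIcc
    have hmM : m + 1 ≤ M := by
      have := Finset.card_le_card hsub
      rw [Nat.card_Icc] at this
      omega
    have hK' : K.erase t ⊆ Icc 1 (M - 1) := by
      intro a ha
      have haK := Finset.mem_of_mem_erase ha
      have hat : a ≠ t := Finset.ne_of_mem_erase ha
      have hale : a ≤ t := K.le_max' a haK
      have := hsub haK
      rw [mem_Icc] at this ⊢
      omega
    have hcard' : (K.erase t).card = m := by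
      rw [Finset.card_erase_of_mem htK]; omega
    have ihres := ih (M - 1) (K.erase t)
      (fun i j h1 h2 h3 => hv i j h1 h2 (by omega)) hK' hcard'
    have hvt : v M ≤ v t := hv t M htIcc.1 htIcc.2 le_rfl
    rw [show M - 1 - m + 1 = M - m from by omega] at ihres
    have hsplit : ∑ j ∈ Icc (M - m) M, v j = (∑ j ∈ Icc (M - m) (M - 1), v j) + v M := by
      have h2 := Finset.sum_Icc_succ_top (a := M - m) (b := M - 1) (by omega) v
      rwa [show M - 1 + 1 = M from by omega] at h2
    have hKsum : ∑ j ∈ K, v j = v t + ∑ j ∈ K.erase t, v j :=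
      (Finset.add_sum_erase K v htK).symm
    rw [show M - (m + 1) + 1 = M - m from by omega, hsplit, hKsum]
    linarith

lemma aux_sum_reflect (f : ℕ → ℝ) (n j : ℕ) (hj : j ≤ 2 * n) :
    ∑ i ∈ Icc 1 j, f (2 * n + 1 - i) = ∑ k ∈ Icc (2 * n + 1 - j) (2 * n), f k := by
  apply Finset.sum_nbij' (i := fun a => 2 * n + 1 - a) (j := fun a => 2 * n + 1 - a)
  · intro a ha; rw [mem_Icc] at ha ⊢; omega
  · intro a ha; rw [mem_Icc] at ha ⊢; omega
  · intro a ha; rw [mem_Icc] at ha; omega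
  · intro a ha; rw [mem_Icc] at ha; omega
  · intro a ha; rfl

/-- Let `n ≥ 1`, let `h 1 > h 2 > ... > h (2n)` be integers and
`v 1 ≥ v 2 ≥ ... ≥ v (2n)` real numbers satisfying the pairing condition and the
Newton-above-Hodge condition.  If `I ⊆ {1, ..., 2n}` is a non-critical slope subset of
cardinality `n`, then `I` is of Shalika type: for every `1 ≤ i ≤ n` the set `I` contains
exactly one element of the pair `{i, 2n + 1 − i}`. -/
theorem non_critical_slope_is_shalika_type
    (n : ℕ) (hn : 1 ≤ n) (h : ℕ → ℤ) (v : ℕ → ℝ)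
    (hdec : ∀ i, 1 ≤ i → i < 2 * n → h (i + 1) < h i)
    (vdec : ∀ i, 1 ≤ i → i < 2 * n → v (i + 1) ≤ v i)
    (pairing : ∀ i, 1 ≤ i → i ≤ n →
      v i + v (2 * n + 1 - i) = (h i : ℝ) + (h (2 * n + 1 - i) : ℝ))
    (newton_above_hodge : ∀ j, 1 ≤ j → j ≤ 2 * n →
      ∑ i ∈ Icc 1 j, (h (2 * n + 1 - i) : ℝ) ≤ ∑ i ∈ Icc 1 j, v (2 * n + 1 - i))
    (endpoints : ∑ i ∈ Icc 1 (2 * n), v (2 * n + 1 - i)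
      = ∑ i ∈ Icc 1 (2 * n), (h (2 * n + 1 - i) : ℝ))
    (I : Finset ℕ) (hI : I ⊆ Icc 1 (2 * n)) (hcard : I.card = n)
    (hncs : ∑ i ∈ I, v i - ∑ i ∈ Icc (n + 1) (2 * n), (h i : ℝ)
      < (h n : ℝ) - (h (n + 1) : ℝ)) :
    ∀ i, 1 ≤ i → i ≤ n →
      ((i ∈ I ∧ 2 * n + 1 - i ∉ I) ∨ (i ∉ I ∧ 2 * n + 1 - i ∈ I)) := by
  intro i₀ hi₀1 hi₀n
  by_contra hcon
  push_neg at hcon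
  obtain ⟨hcon1, hcon2⟩ := hcon
  -- first: n ≥ 2
  have hn2 : 2 ≤ n := by
    by_contra hn2
    have hn1 : n = 1 := by omega
    subst hn1
    have hi : i₀ = 1 := by omega
    subst hi
    have h2 : (2 : ℕ) = 2 * 1 + 1 - 1 := by norm_num
    obtain ⟨x, hx⟩ := Finset.card_eq_one.mp hcard
    subst hx
    have hxm := hI (Finset.mem_singleton_self x)
    rw [mem_Icc] at hxm
    have hx12 : x = 1 ∨ x = 2 := by omega
    have hboth : (1 : ℕ) ∈ ({x} : Finset ℕ) ∧ (2 : ℕ) ∈ ({x} : Finset ℕ) := by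
      rcases hx12 with rfl | rfl
      · exact ⟨Finset.mem_singleton_self 1, h2 ▸ hcon1 (Finset.mem_singleton_self 1)⟩
      · have h1 : (1:ℕ) ∈ ({2} : Finset ℕ) := by
          by_contra hnot
          exact (h2 ▸ hcon2 hnot) (Finset.mem_singleton_self 2)
        exact ⟨h1, Finset.mem_singleton_self 2⟩
    rw [Finset.mem_singleton, Finset.mem_singleton] at hboth
    omega
  -- monotonicity of v on [1, 2n]
  have vmono : ∀ i j, 1 ≤ i → i ≤ j → j ≤ 2 * n → v j ≤ v i := by
    have key : ∀ d i, 1 ≤ i → i + d ≤ 2 * n → v (i + d) ≤ v i := by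
      intro d
      induction d with
      | zero => intro i _ _; simp
      | succ k ih =>
        intro i h1 h2
        have e1 : i + (k + 1) = (i + k) + 1 := by omega
        have e2 := vdec (i + k) (by omega) (by omega)
        have e3 := ih i h1 (by omega)
        rw [e1]; linarith
    intro i j h1 h2 h3
    have := key (j - i) i h1 (by omega)
    rwa [show i + (j - i) = j from by omega] at this
  -- the Newton tail bound on [n+3, 2n]
  have tailv : ∑ j ∈ Icc (n + 3) (2 * n), (h j : ℝ) ≤ ∑ j ∈ Icc (n + 3) (2 * n), v j := by
    rcases eq_or_lt_of_le hn2 with h2 | h3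
    · rw [Finset.Icc_eq_empty (by omega)]
      simp
    · have hnw := newton_above_hodge (n - 2) (by omega) (by omega)
      have e1 := aux_sum_reflect (fun k => (h k : ℝ)) n (n - 2) (by omega)
      have e2 := aux_sum_reflect v n (n - 2) (by omega)
      rw [e1, e2, show 2 * n + 1 - (n - 2) = n + 3 from by omega] at hnw
      exact hnw
  -- splitting the Hodge bottom sum
  have hsplit : ∑ j ∈ Icc (n + 1) (2 * n), (h j : ℝ)
      = (h (n + 1) : ℝ) + (h (n + 2) : ℝ) + ∑ j ∈ Icc (n + 3) (2 * n), (h j : ℝ) := by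
    have e : Icc (n + 1) (2 * n) = insert (n + 1) (insert (n + 2) (Icc (n + 3) (2 * n))) := by
      ext a
      simp only [mem_Icc, mem_insert]
      omega
    rw [e, Finset.sum_insert (by simp only [mem_insert, mem_Icc]; omega),
      Finset.sum_insert (by simp only [mem_Icc]; omega)]
    ring
  -- strict decrease facts
  have hd1 : (h (n + 2) : ℝ) < (h (n + 1) : ℝ) := by
    exact_mod_cast hdec (n + 1) (by omega) (by omega)
  have hd2 : (h n : ℝ) < (h (n - 1) : ℝ) := by
    have := hdec (n - 1) (by omega) (by omega)
    rw [show n - 1 + 1 = n from by omega] at this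
    exact_mod_cast this
  by_cases hc : 2 ≤ (I ∩ Icc 1 (n + 1)).card
  · -- Case A : two elements of I are ≤ n+1
    obtain ⟨a, ha, b, hb, hab⟩ := Finset.one_lt_card.mp hc
    have key : ∀ x y, x ∈ I ∩ Icc 1 (n + 1) → y ∈ I ∩ Icc 1 (n + 1) → x < y → False := by
      intro x y hx hy hxy
      rw [Finset.mem_inter, mem_Icc] at hx hy
      obtain ⟨hxI, hx1, _⟩ := hx
      obtain ⟨hyI, hy1, hy2⟩ := hy
      have hxn : x ≤ n := by omega
      -- decompose the sum over I
      have hyx : y ∈ I.erase x := Finset.mem_erase.mpr ⟨by omega, hyI⟩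
      have hsum1 : ∑ j ∈ I, v j = v x + (v y + ∑ j ∈ (I.erase x).erase y, v j) := by
        rw [Finset.add_sum_erase _ v hyx, Finset.add_sum_erase _ v hxI]
      have hKsub : (I.erase x).erase y ⊆ Icc 1 (2 * n) :=
        fun z hz => hI (Finset.mem_of_mem_erase (Finset.mem_of_mem_erase hz))
      have hKcard : ((I.erase x).erase y).card = n - 2 := by
        rw [Finset.card_erase_of_mem hyx, Finset.card_erase_of_mem hxI, hcard]
        omega
      have hbot := aux_sum_bottom_le v (n - 2) (2 * n) ((I.erase x).erase y)
        vmono hKsub hKcard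
      rw [show 2 * n - (n - 2) + 1 = n + 3 from by omega] at hbot
      have hvx : v n ≤ v x := vmono x n hx1 hxn (by omega)
      have hvy : v (n + 1) ≤ v y := vmono y (n + 1) hy1 hy2 (by omega)
      have hpair := pairing n (by omega) le_rfl
      rw [show 2 * n + 1 - n = n + 1 from by omega] at hpair
      rw [hsum1, hsplit] at hncs
      linarith
    rw [Finset.mem_inter, mem_Icc] at ha hb
    rcases lt_or_gt_of_ne hab with hlt | hgt
    · exact key a b (by rw [Finset.mem_inter, mem_Icc]; exact ⟨ha.1, ha.2⟩)
        (by rw [Finset.mem_inter, mem_Icc]; exact ⟨hb.1, hb.2⟩) hlt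
    · exact key b a (by rw [Finset.mem_inter, mem_Icc]; exact ⟨hb.1, hb.2⟩)
        (by rw [Finset.mem_inter, mem_Icc]; exact ⟨ha.1, ha.2⟩) hgt
  · -- Case B : I = {x} ∪ [n+2, 2n]
    push_neg at hc
    have hfilt := Finset.card_filter_add_card_filter_not
      (s := I) (p := fun j => j ≤ n + 1)
    have hs1sub : I.filter (fun j => j ≤ n + 1) ⊆ I ∩ Icc 1 (n + 1) := by
      intro z hz
      rw [Finset.mem_filter] at hz
      have := hI hz.1
      rw [mem_Icc] at this
      rw [Finset.mem_inter, mem_Icc]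
      exact ⟨hz.1, this.1, hz.2⟩
    have hs1le : (I.filter (fun j => j ≤ n + 1)).card ≤ 1 := by
      have := Finset.card_le_card hs1sub
      omega
    have hs2sub : I.filter (fun j => ¬ j ≤ n + 1) ⊆ Icc (n + 2) (2 * n) := by
      intro z hz
      rw [Finset.mem_filter] at hz
      have := hI hz.1
      rw [mem_Icc] at this ⊢
      omega
    have hs2card : (Icc (n + 2) (2 * n)).card = n - 1 := by
      rw [Nat.card_Icc]; omega
    have hs2eq : I.filter (fun j => ¬ j ≤ n + 1) = Icc (n + 2) (2 * n) := by
      apply Finset.eq_of_subset_of_card_le hs2sub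
      rw [hs2card]
      omega
    have hsubI : Icc (n + 2) (2 * n) ⊆ I := by
      rw [← hs2eq]; exact Finset.filter_subset _ _
    have hs1card : (I.filter (fun j => j ≤ n + 1)).card = 1 := by
      have := congrArg Finset.card hs2eq
      rw [hs2card] at this
      omega
    obtain ⟨x, hxeq⟩ := Finset.card_eq_one.mp hs1card
    have hxI : x ∈ I := by
      have : x ∈ I.filter (fun j => j ≤ n + 1) := hxeq ▸ Finset.mem_singleton_self x
      exact (Finset.mem_filter.mp this).1
    have hxle : x ≤ n + 1 := by
      have : x ∈ I.filter (fun j => j ≤ n + 1) := hxeq ▸ Finset.mem_singleton_self x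
      exact (Finset.mem_filter.mp this).2
    have hx1 : 1 ≤ x := by
      have := hI hxI; rw [mem_Icc] at this; exact this.1
    have huniq : ∀ j ∈ I, j ≤ n + 1 → j = x := by
      intro j hj hjle
      have : j ∈ I.filter (fun j => j ≤ n + 1) := Finset.mem_filter.mpr ⟨hj, hjle⟩
      rw [hxeq, Finset.mem_singleton] at this
      exact this
    -- I = insert x (Icc (n+2) (2n))
    have hIeq : I = insert x (Icc (n + 2) (2 * n)) := by
      apply Finset.Subset.antisymm
      · intro z hz
        rw [Finset.mem_insert]
        by_cases hzle : z ≤ n + 1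
        · left; exact huniq z hz hzle
        · right
          have := hI hz
          rw [mem_Icc] at this ⊢
          omega
      · intro z hz
        rw [Finset.mem_insert] at hz
        rcases hz with rfl | hz
        · exact hxI
        · exact hsubI hz
    -- the failing pair forces x ≤ n - 1
    have hxn1 : x ≤ n - 1 := by
      by_cases hmem : i₀ ∈ I
      · -- both i₀ and its partner in I
        have hp := hcon1 hmem
        have hxi : i₀ = x := huniq i₀ hmem (by omega)
        by_contra hxbig
        have hxeqn : x = n ∨ x = n + 1 := by omega
        rcases hxeqn with hx' | hx'
        · -- x = n, so i₀ = n and partner = n+1 ∈ I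
          have hpp : (2 * n + 1 - i₀) = n + 1 := by omega
          rw [hpp] at hp
          have := huniq (n + 1) hp (by omega)
          omega
        · omega
      · -- neither i₀ nor its partner in I
        have hp := hcon2 hmem
        have hp2 : 2 * n + 1 - i₀ = n + 1 := by
          by_contra hne
          apply hp
          apply hsubI
          rw [mem_Icc]
          omega
        have hi₀n' : i₀ = n := by omega
        have hxn : x ≠ n := by rintro rfl; exact hmem (hi₀n' ▸ hxI)
        have hxn1' : x ≠ n + 1 := by rintro rfl; exact hp (hp2 ▸ hxI)
        omega
    -- sum decomposition and bounds
    have hxnot : x ∉ Icc (n + 2) (2 * n) := by rw [mem_Icc]; omega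
    have hsum1 : ∑ j ∈ I, v j = v x + ∑ j ∈ Icc (n + 2) (2 * n), v j := by
      rw [hIeq, Finset.sum_insert hxnot]
    have hsum2 : ∑ j ∈ Icc (n + 2) (2 * n), v j
        = v (n + 2) + ∑ j ∈ Icc (n + 3) (2 * n), v j := by
      have e : Icc (n + 2) (2 * n) = insert (n + 2) (Icc (n + 3) (2 * n)) := by
        ext a
        simp only [mem_Icc, mem_insert]
        omega
      rw [e, Finset.sum_insert (by simp only [mem_Icc]; omega)]
    have hvx : v (n - 1) ≤ v x := vmono x (n - 1) hx1 (by omega) (by omega)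
    have hpair := pairing (n - 1) (by omega) (by omega)
    rw [show 2 * n + 1 - (n - 1) = n + 2 from by omega] at hpair
    rw [hsum1, hsum2, hsplit] at hncs
    linarith
end

section
/- Let n ≥ 1, let h_1 > h_2 > ... > h_{2n} be integers, and let v_1 ≥ v_2 ≥ ... ≥ v_{2n} be real numbers satisfying the pairing condition and the Newton-above-Hodge condition. Assume in addition the Pollack condition v_n = v_{n+1}. Then r := Σ_{i=n+1}^{2n} v_i − Σ_{i=n+1}^{2n} h_i ≥ (h_n − h_{n+1})/2. -/
open Finset

lemma reflect_sum (n : ℕ) (f : ℕ → ℝ) (j : ℕ) (hj : j ≤ 2 * n) :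
    ∑ i ∈ Icc 1 j, f (2 * n + 1 - i) = ∑ i ∈ Icc (2 * n + 1 - j) (2 * n), f i := by
  apply Finset.sum_nbij' (fun i => 2 * n + 1 - i) (fun i => 2 * n + 1 - i) <;>
    intro a ha <;> simp only [Finset.mem_Icc] at * <;> omega

/-- Let `n ≥ 1`, let `h 1 > h 2 > ... > h (2n)` be integers and
`v 1 ≥ v 2 ≥ ... ≥ v (2n)` real numbers satisfying the pairing condition and the
Newton-above-Hodge condition.  Assume in addition the Pollack condition `v n = v (n+1)`.
Then `r := ∑_{i = n+1}^{2n} v i − ∑_{i = n+1}^{2n} h i ≥ (h n − h (n+1)) / 2`. -/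
theorem pollack_condition_slope_lower_bound
    (n : ℕ) (hn : 1 ≤ n) (h : ℕ → ℤ) (v : ℕ → ℝ)
    (hdec : ∀ i, 1 ≤ i → i < 2 * n → h (i + 1) < h i)
    (vdec : ∀ i, 1 ≤ i → i < 2 * n → v (i + 1) ≤ v i)
    (pairing : ∀ i, 1 ≤ i → i ≤ n →
      v i + v (2 * n + 1 - i) = (h i : ℝ) + (h (2 * n + 1 - i) : ℝ))
    (newton_above_hodge : ∀ j, 1 ≤ j → j ≤ 2 * n →
      ∑ i ∈ Icc 1 j, (h (2 * n + 1 - i) : ℝ) ≤ ∑ i ∈ Icc 1 j, v (2 * n + 1 - i))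
    (endpoints : ∑ i ∈ Icc 1 (2 * n), v (2 * n + 1 - i)
      = ∑ i ∈ Icc 1 (2 * n), (h (2 * n + 1 - i) : ℝ))
    (pollack : v n = v (n + 1)) :
    ((h n : ℝ) - (h (n + 1) : ℝ)) / 2
      ≤ ∑ i ∈ Icc (n + 1) (2 * n), v i - ∑ i ∈ Icc (n + 1) (2 * n), (h i : ℝ) := by
  -- v (n+1) = (h n + h (n+1)) / 2
  have hpair := pairing n hn le_rfl
  have hidx : 2 * n + 1 - n = n + 1 := by omega
  rw [hidx, pollack] at hpair
  have hv : v (n + 1) - (h (n + 1) : ℝ) = ((h n : ℝ) - (h (n + 1) : ℝ)) / 2 := by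
    linarith
  -- tail nonnegativity
  have tail : ∑ i ∈ Icc (n + 2) (2 * n), (h i : ℝ) ≤ ∑ i ∈ Icc (n + 2) (2 * n), v i := by
    rcases Nat.eq_or_lt_of_le hn with h1 | h2
    · have : Icc (n + 2) (2 * n) = ∅ := by
        rw [Finset.Icc_eq_empty_iff]; omega
      simp [this]
    · have hj : (1 : ℕ) ≤ n - 1 := by omega
      have hj2 : n - 1 ≤ 2 * n := by omega
      have := newton_above_hodge (n - 1) hj hj2
      rw [reflect_sum n (fun i => (h i : ℝ)) (n - 1) hj2,
        reflect_sum n v (n - 1) hj2] at this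
      have he : 2 * n + 1 - (n - 1) = n + 2 := by omega
      rwa [he] at this
  -- split the sums
  have hsplit : ∀ f : ℕ → ℝ, ∑ i ∈ Icc (n + 1) (2 * n), f i
      = f (n + 1) + ∑ i ∈ Icc (n + 2) (2 * n), f i := by
    intro f
    have hins : Icc (n + 1) (2 * n) = insert (n + 1) (Icc (n + 2) (2 * n)) := by
      ext x; simp only [Finset.mem_Icc, Finset.mem_insert]; omega
    rw [hins, Finset.sum_insert (by simp only [Finset.mem_Icc]; omega)]
  rw [hsplit v, hsplit (fun i => (h i : ℝ))]
  linarith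
end

section
/- Let p be an odd prime, γ ∈ ℤ_p with v_p(γ − 1) = 1, and j ∈ ℤ. For n ≥ 1, consider the polynomial P(X) = Φ_{p^n}(γ^{−j}(1 + X))/p ∈ ℚ_p[X], where Φ_{p^n} is the p^n-th cyclotomic polynomial. Then for every integer h ≥ 0: v_h(P) = 0 if h ≤ n − 1, and v_h(P) = p^{n−1−h} − 1 if h ≥ n. -/
open Polynomial

namespace Stmt4

open scoped Classical

/-- The `p`-adic valuation on `ℚ_p`, with value `⊤` at `0`, realised as
`v_p(x) = -log_p ‖x‖`. -/
noncomputable def vp (p : ℕ) [Fact p.Prime] (x : ℚ_[p]) : EReal :=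
  if x = 0 then ⊤ else ((-Real.logb p ‖x‖ : ℝ) : EReal)

/-- `u_h = 1 / (p^h (p - 1))`. -/
noncomputable def u (p : ℕ) (h : ℕ) : ℝ := 1 / ((p : ℝ) ^ h * ((p : ℝ) - 1))

/-- The Gauss valuation `v_h(f) = inf_k (v_p(a_k) + k u_h)` of a polynomial
`f = ∑ a_k X^k`, i.e. the sup-norm valuation on the closed disk
`{x : v_p(x) ≥ u_h}`. -/
noncomputable def vh (p : ℕ) [Fact p.Prime] (f : Polynomial ℚ_[p]) (h : ℕ) : EReal :=
  ⨅ k : ℕ, vp p (f.coeff k) + (((k : ℝ) * u p h : ℝ) : EReal)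

open Finset

variable {p : ℕ} [Fact p.Prime]

private theorem geomA (x : ℤ_[p]) (m : ℕ) : ‖x ^ m - 1‖ ≤ ‖x - 1‖ := by
  rw [← geom_sum_mul, norm_mul]
  calc ‖∑ i ∈ range m, x ^ i‖ * ‖x - 1‖ ≤ 1 * ‖x - 1‖ := by
        gcongr
        exact IsUltrametricDist.norm_sum_le_of_forall_le_of_nonneg zero_le_one
          (fun i _ => PadicInt.norm_le_one _)
    _ = ‖x - 1‖ := one_mul _

private theorem lemB (hp : Odd p) (b : ℤ_[p]) (hb : ‖b - 1‖ ≤ (p : ℝ)⁻¹) :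
    ‖∑ i ∈ range p, b ^ i‖ = (p : ℝ)⁻¹ := by
  have hp1 : (1 : ℝ) < p := by exact_mod_cast (Fact.out : p.Prime).one_lt
  have hinv1 : (p : ℝ)⁻¹ < 1 := inv_lt_one_of_one_lt₀ hp1
  have hinv0 : (0 : ℝ) < (p : ℝ)⁻¹ := by positivity
  have key : ∑ i ∈ range p, b ^ i
      = (p : ℤ_[p]) + (∑ i ∈ range p, ∑ l ∈ range i, b ^ l) * (b - 1) := by
    rw [Finset.sum_mul]
    have : ∀ i ∈ range p, (∑ l ∈ range i, b ^ l) * (b - 1) = b ^ i - 1 :=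
      fun i _ => geom_sum_mul b i
    rw [Finset.sum_congr rfl this, Finset.sum_sub_distrib, Finset.sum_const, card_range]
    ring
  have hS : ‖∑ i ∈ range p, ∑ l ∈ range i, b ^ l‖ ≤ (p : ℝ)⁻¹ := by
    have hsplit : ∑ i ∈ range p, ∑ l ∈ range i, b ^ l
        = ((∑ i ∈ range p, i : ℕ) : ℤ_[p]) + ∑ i ∈ range p, ∑ l ∈ range i, (b ^ l - 1) := by
      push_cast
      rw [← Finset.sum_add_distrib]
      refine Finset.sum_congr rfl fun i _ => ?_
      rw [Finset.sum_sub_distrib, Finset.sum_const, card_range]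
      ring
    rw [hsplit]
    refine le_trans (PadicInt.nonarchimedean _ _) (max_le ?_ ?_)
    · have h2 : 2 ∣ p - 1 := by
        obtain ⟨k, hk⟩ := hp
        omega
      have : (∑ i ∈ range p, i) = p * ((p - 1) / 2) := by
        rw [Finset.sum_range_id, Nat.mul_div_assoc p h2]
      rw [this]
      push_cast
      rw [norm_mul, PadicInt.norm_p]
      calc (p:ℝ)⁻¹ * ‖((((p-1)/2 : ℕ)) : ℤ_[p])‖ ≤ (p:ℝ)⁻¹ * 1 := by
            gcongr; exact PadicInt.norm_le_one _
        _ = (p:ℝ)⁻¹ := mul_one _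
    · refine IsUltrametricDist.norm_sum_le_of_forall_le_of_nonneg hinv0.le fun i _ => ?_
      refine IsUltrametricDist.norm_sum_le_of_forall_le_of_nonneg hinv0.le fun l _ => ?_
      exact le_trans (geomA b l) hb
  rw [key]
  rw [PadicInt.norm_add_eq_max_of_ne, PadicInt.norm_p, max_eq_left]
  · rw [norm_mul]
    calc ‖∑ i ∈ range p, ∑ l ∈ range i, b ^ l‖ * ‖b - 1‖ ≤ (p:ℝ)⁻¹ * (p:ℝ)⁻¹ :=
          mul_le_mul hS hb (norm_nonneg _) hinv0.le
      _ ≤ (p:ℝ)⁻¹ := by nlinarith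
  · rw [PadicInt.norm_p, norm_mul]
    intro hcon
    have : ‖∑ i ∈ range p, ∑ l ∈ range i, b ^ l‖ * ‖b - 1‖ < (p:ℝ)⁻¹ := by
      calc ‖∑ i ∈ range p, ∑ l ∈ range i, b ^ l‖ * ‖b - 1‖ ≤ (p:ℝ)⁻¹ * (p:ℝ)⁻¹ :=
            mul_le_mul hS hb (norm_nonneg _) hinv0.le
        _ < (p:ℝ)⁻¹ := by nlinarith
    rw [← hcon] at this
    exact lt_irrefl _ this

private theorem lemC (γ : ℤ_[p]) (hγ : ‖γ - 1‖ = (p : ℝ)⁻¹) (j : ℤ) :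
    ∃ az : ℤ_[p], ((az : ℚ_[p]) = (γ : ℚ_[p]) ^ (-j)) ∧ ‖(az : ℚ_[p])‖ = 1 ∧
      ‖az - 1‖ ≤ (p : ℝ)⁻¹ := by
  have hp1 : (1 : ℝ) < p := by exact_mod_cast (Fact.out : p.Prime).one_lt
  have hinv1 : (p : ℝ)⁻¹ < 1 := inv_lt_one_of_one_lt₀ hp1
  have hγ1 : ‖γ‖ = 1 := by
    have : γ = (γ - 1) + 1 := by ring
    rw [this, PadicInt.norm_add_eq_max_of_ne]
    · rw [hγ, norm_one]; exact max_eq_right hinv1.le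
    · rw [hγ, norm_one]; exact hinv1.ne
  have hγQ : ‖(γ : ℚ_[p])‖ = 1 := by rwa [PadicInt.norm_def] at hγ1
  have hγQ0 : (γ : ℚ_[p]) ≠ 0 := by
    intro h; rw [h, norm_zero] at hγQ; norm_num at hγQ
  have hnorm1 : ‖(γ : ℚ_[p]) ^ (-j)‖ = 1 := by
    rw [norm_zpow, hγQ, one_zpow]
  have hle : ‖(γ : ℚ_[p]) ^ (-j) - 1‖ ≤ (p : ℝ)⁻¹ := by
    have hnat : ∀ m : ℕ, ‖(γ : ℚ_[p]) ^ m - 1‖ ≤ (p : ℝ)⁻¹ := by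
      intro m
      have := geomA γ m
      rw [hγ] at this
      calc ‖(γ : ℚ_[p]) ^ m - 1‖ = ‖((γ ^ m - 1 : ℤ_[p]) : ℚ_[p])‖ := by push_cast; ring_nf
        _ = ‖(γ ^ m - 1 : ℤ_[p])‖ := by rw [← PadicInt.norm_def]
        _ ≤ (p : ℝ)⁻¹ := this
    rcases le_or_gt 0 j with hj | hj
    · have : (γ : ℚ_[p]) ^ (-j) = ((γ : ℚ_[p]) ^ j.toNat)⁻¹ := by
        rw [zpow_neg, ← zpow_natCast, Int.toNat_of_nonneg hj]
      rw [this]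
      have hy : ‖(γ : ℚ_[p]) ^ j.toNat‖ = 1 := by rw [norm_pow, hγQ, one_pow]
      have hy0 : (γ : ℚ_[p]) ^ j.toNat ≠ 0 := pow_ne_zero _ hγQ0
      have : ((γ : ℚ_[p]) ^ j.toNat)⁻¹ - 1
          = (1 - (γ : ℚ_[p]) ^ j.toNat) * ((γ : ℚ_[p]) ^ j.toNat)⁻¹ := by
        field_simp
      rw [this, norm_mul, norm_inv, hy, inv_one, mul_one, ← norm_neg, neg_sub]
      exact hnat _
    · have : (γ : ℚ_[p]) ^ (-j) = (γ : ℚ_[p]) ^ (-j).toNat := by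
        rw [← zpow_natCast, Int.toNat_of_nonneg (by omega)]
      rw [this]; exact hnat _
  refine ⟨⟨(γ : ℚ_[p]) ^ (-j), hnorm1.le⟩, rfl, hnorm1, ?_⟩
  rw [PadicInt.norm_def]
  push_cast
  exact hle

private theorem lemD {n : ℕ} (hn : 1 ≤ n) (az : ℤ_[p]) (haz : ‖az - 1‖ ≤ (p : ℝ)⁻¹) :
    ((cyclotomic (p ^ n) ℤ_[p]).comp (C az * (1 + X))).map PadicInt.toZMod
      = X ^ (p ^ (n - 1) * (p - 1)) := by
  have hp1 : (1 : ℝ) < p := by exact_mod_cast (Fact.out : p.Prime).one_lt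
  have hinv1 : (p : ℝ)⁻¹ < 1 := inv_lt_one_of_one_lt₀ hp1
  have h1 : PadicInt.toZMod az = 1 := by
    have hdvd : (p : ℤ_[p]) ∣ az - 1 :=
      (PadicInt.norm_lt_one_iff_dvd _).mp (lt_of_le_of_lt haz hinv1)
    obtain ⟨c, hc⟩ := hdvd
    have : az = 1 + p * c := by rw [← hc]; ring
    rw [this]
    simp [map_add, map_mul, map_natCast, ZMod.natCast_self]
  rw [Polynomial.map_comp, map_cyclotomic, Polynomial.map_mul, Polynomial.map_add,
    Polynomial.map_one, Polynomial.map_X, map_C, h1, map_one, one_mul]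
  have hnn : p ^ n = p ^ (n - 1 + 1) := by rw [Nat.sub_add_cancel hn]
  rw [hnn, cyclotomic_prime_pow_eq_geom_sum (Fact.out : p.Prime)]
  have hsumcomp : ((∑ i ∈ range p, (X ^ p ^ (n-1)) ^ i : (ZMod p)[X]).comp (1 + X))
      = ∑ i ∈ range p, ((1 + X : (ZMod p)[X]) ^ p ^ (n-1)) ^ i := by
    simp only [← coe_compRingHom_apply, map_sum, map_pow]
    simp [coe_compRingHom_apply, X_comp]
  rw [hsumcomp]
  have hT : (1 + X : (ZMod p)[X]) ^ p ^ (n-1) = 1 + X ^ p ^ (n-1) := by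
    rw [add_pow_char_pow, one_pow]
  rw [hT]
  set T : (ZMod p)[X] := X ^ p ^ (n-1) with hTdef
  have hT0 : T ≠ 0 := pow_ne_zero _ X_ne_zero
  have hgs := geom_sum_mul (1 + T) p
  have hrhs : (1 + T) ^ p - 1 = T ^ p := by
    rw [add_pow_char, one_pow, add_sub_cancel_left]
  rw [add_sub_cancel_left, hrhs] at hgs
  have hTp : T ^ (p - 1) * T = T ^ p := by
    rw [← pow_succ, Nat.sub_add_cancel (Fact.out : p.Prime).one_lt.le]
  rw [← hTp] at hgs
  have := mul_right_cancel₀ hT0 hgs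
  rw [this, hTdef, ← pow_mul]

private theorem lemE {n : ℕ} (hp : Odd p) (hn : 1 ≤ n) (az : ℤ_[p])
    (haz : ‖az - 1‖ ≤ (p : ℝ)⁻¹) :
    ‖((cyclotomic (p ^ n) ℤ_[p]).comp (C az * (1 + X))).coeff 0‖ = (p : ℝ)⁻¹ := by
  have hnn : p ^ n = p ^ (n - 1 + 1) := by rw [Nat.sub_add_cancel hn]
  rw [coeff_zero_eq_eval_zero, eval_comp, hnn,
    cyclotomic_prime_pow_eq_geom_sum (Fact.out : p.Prime)]
  simp only [eval_mul, eval_add, eval_one, eval_C, eval_X, eval_zero, add_zero, mul_one,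
    eval_finset_sum, eval_pow]
  exact lemB hp _ (le_trans (geomA az _) haz)

/-- Let `p` be an odd prime, `γ ∈ ℤ_p` with `v_p(γ - 1) = 1`
(equivalently `‖γ - 1‖ = p⁻¹`), and `j ∈ ℤ`.  For `n ≥ 1` consider the polynomial
`P(X) = Φ_{p^n}(γ^{-j}(1 + X)) / p ∈ ℚ_p[X]`, with `Φ_{p^n}` the `p^n`-th cyclotomic
polynomial.  Then for every integer `h ≥ 0`: `v_h(P) = 0` if `h ≤ n - 1`, and
`v_h(P) = p^{n - 1 - h} - 1` if `h ≥ n`. -/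
theorem gauss_valuation_of_cyclotomic_factor
    (p : ℕ) [Fact p.Prime] (hp : Odd p) (γ : ℤ_[p]) (hγ : ‖γ - 1‖ = (p : ℝ)⁻¹)
    (j : ℤ) (n : ℕ) (hn : 1 ≤ n)
    (P : Polynomial ℚ_[p])
    (hP : P = Polynomial.C ((p : ℚ_[p]))⁻¹ *
      (Polynomial.cyclotomic (p ^ n) ℚ_[p]).comp
        (Polynomial.C (((γ : ℚ_[p])) ^ (-j)) * (1 + Polynomial.X))) :
    ∀ h : ℕ,
      (h ≤ n - 1 → vh p P h = (0 : EReal)) ∧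
      (n ≤ h → vh p P h = (((p : ℝ) ^ ((n : ℤ) - 1 - (h : ℤ)) - 1 : ℝ) : EReal)) := by
  have hpp : p.Prime := Fact.out
  have hp1 : (1 : ℝ) < p := by exact_mod_cast hpp.one_lt
  have hp0 : (0 : ℝ) < p := by positivity
  have hinv1 : (p : ℝ)⁻¹ < 1 := inv_lt_one_of_one_lt₀ hp1
  obtain ⟨az, hazQ, haznorm, haz1⟩ := lemC γ hγ j
  set d : ℕ := p ^ (n - 1) * (p - 1) with hd
  set Qz : Polynomial ℤ_[p] := (cyclotomic (p ^ n) ℤ_[p]).comp (C az * (1 + X)) with hQz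
  have hmap : Qz.map PadicInt.Coe.ringHom
      = (cyclotomic (p ^ n) ℚ_[p]).comp (C ((γ : ℚ_[p]) ^ (-j)) * (1 + X)) := by
    rw [hQz, Polynomial.map_comp, map_cyclotomic, Polynomial.map_mul, Polynomial.map_add,
      Polynomial.map_one, Polynomial.map_X, map_C]
    rw [show (PadicInt.Coe.ringHom az : ℚ_[p]) = (γ : ℚ_[p]) ^ (-j) from hazQ]
  have hPcoeff : ∀ k, P.coeff k = (p : ℚ_[p])⁻¹ * ((Qz.coeff k : ℤ_[p]) : ℚ_[p]) := by
    intro k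
    rw [hP, coeff_C_mul, ← hmap, coeff_map]
    rfl
  have hQdeg : Qz.natDegree ≤ d := by
    refine le_trans natDegree_comp_le ?_
    have h1 : (cyclotomic (p ^ n) ℤ_[p]).natDegree = d := by
      rw [natDegree_cyclotomic, Nat.totient_prime_pow hpp (by omega)]
    have h2 : (C az * (1 + X) : Polynomial ℤ_[p]).natDegree ≤ 1 := by
      refine le_trans natDegree_mul_le ?_
      rw [natDegree_C, zero_add]
      exact le_trans (natDegree_add_le _ _) (by simp)
    calc (cyclotomic (p ^ n) ℤ_[p]).natDegree * (C az * (1 + X)).natDegree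
        ≤ d * 1 := Nat.mul_le_mul (le_of_eq h1) h2
      _ = d := mul_one d
  have hbig : ∀ k, d < k → P.coeff k = 0 := by
    intro k hk
    rw [hPcoeff k, coeff_eq_zero_of_natDegree_lt (lt_of_le_of_lt hQdeg hk)]
    simp
  have hmod : Qz.map PadicInt.toZMod = X ^ d := lemD hn az haz1
  have hsmall : ∀ k, k ≠ d → ‖((Qz.coeff k : ℤ_[p]) : ℚ_[p])‖ ≤ (p : ℝ)⁻¹ := by
    intro k hk
    have hz : PadicInt.toZMod (Qz.coeff k) = 0 := by
      have := congrArg (fun q => Polynomial.coeff q k) hmod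
      simpa [Polynomial.coeff_map, Polynomial.coeff_X_pow, hk] using this
    have hdvd : (p : ℤ_[p]) ∣ Qz.coeff k := by
      rw [← PadicInt.norm_lt_one_iff_dvd]
      by_contra hcon
      have h1 : ‖Qz.coeff k‖ = 1 :=
        le_antisymm (PadicInt.norm_le_one _) (not_lt.mp hcon)
      have : Qz.coeff k ∈ RingHom.ker (PadicInt.toZMod (p := p)) := hz
      rw [PadicInt.ker_toZMod, PadicInt.maximalIdeal_eq_span_p,
        Ideal.mem_span_singleton, ← PadicInt.norm_lt_one_iff_dvd] at this
      rw [h1] at this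
      exact lt_irrefl _ this
    obtain ⟨c, hc⟩ := hdvd
    rw [hc]
    push_cast
    rw [norm_mul, Padic.norm_p]
    calc (p:ℝ)⁻¹ * ‖(c : ℚ_[p])‖ ≤ (p:ℝ)⁻¹ * 1 := by
          gcongr
          rw [← PadicInt.norm_def]
          exact PadicInt.norm_le_one _
      _ = (p:ℝ)⁻¹ := mul_one _
  have htop : ‖((Qz.coeff d : ℤ_[p]) : ℚ_[p])‖ = 1 := by
    have hne : PadicInt.toZMod (Qz.coeff d) ≠ 0 := by
      have := congrArg (fun q => Polynomial.coeff q d) hmod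
      simp only [Polynomial.coeff_map, Polynomial.coeff_X_pow, if_pos rfl] at this
      rw [this]
      exact one_ne_zero
    have h1 : ¬ ‖Qz.coeff d‖ < 1 := by
      intro hlt
      apply hne
      have : Qz.coeff d ∈ Ideal.span {(p : ℤ_[p])} := by
        rw [Ideal.mem_span_singleton]
        exact (PadicInt.norm_lt_one_iff_dvd _).mp hlt
      rw [← PadicInt.maximalIdeal_eq_span_p, ← PadicInt.ker_toZMod] at this
      exact this
    rw [← PadicInt.norm_def]
    exact le_antisymm (PadicInt.norm_le_one _) (not_lt.mp h1)
  have hzero : ‖((Qz.coeff 0 : ℤ_[p]) : ℚ_[p])‖ = (p : ℝ)⁻¹ := by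
    rw [← PadicInt.norm_def]
    exact lemE hp hn az haz1
  -- norms of coefficients of P
  have hpQ : ‖((p : ℚ_[p]))⁻¹‖ = (p : ℝ) := by
    rw [norm_inv, Padic.norm_p, inv_inv]
  have hP0 : ‖P.coeff 0‖ = 1 := by
    rw [hPcoeff, norm_mul, hpQ, hzero, mul_inv_cancel₀ (ne_of_gt hp0)]
  have hd0 : 0 < d := by
    have := hpp.two_le
    have : 0 < p ^ (n - 1) := Nat.pow_pos hpp.pos
    have : 0 < p - 1 := by omega
    positivity
  have hPd : ‖P.coeff d‖ = p := by
    rw [hPcoeff, norm_mul, hpQ, htop, mul_one]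
  have hPk : ∀ k, k ≠ d → ‖P.coeff k‖ ≤ 1 := by
    intro k hk
    rw [hPcoeff, norm_mul, hpQ]
    calc (p:ℝ) * ‖((Qz.coeff k : ℤ_[p]) : ℚ_[p])‖ ≤ (p:ℝ) * (p:ℝ)⁻¹ := by
          gcongr; exact hsmall k hk
      _ = 1 := mul_inv_cancel₀ (ne_of_gt hp0)
  have hP0ne : P.coeff 0 ≠ 0 := by
    intro h0
    rw [h0, norm_zero] at hP0
    norm_num at hP0
  have hPdne : P.coeff d ≠ 0 := by
    intro h0
    rw [h0, norm_zero] at hPd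
    rw [← hPd] at hp0
    exact lt_irrefl _ hp0
  have hvp0 : vp p (P.coeff 0) = ((0 : ℝ) : EReal) := by
    rw [vp, if_neg hP0ne, hP0, Real.logb_one, neg_zero]
  have hvpd : vp p (P.coeff d) = ((-1 : ℝ) : EReal) := by
    rw [vp, if_neg hPdne, hPd, Real.logb_self_eq_one hp1]
  intro h
  have hu0 : 0 < u p h := by
    rw [u]
    have : (0:ℝ) < (p:ℝ) ^ h := by positivity
    have : (0:ℝ) < (p:ℝ) - 1 := by linarith
    positivity
  have hdu : (d : ℝ) * u p h = (p : ℝ) ^ ((n : ℤ) - 1 - (h : ℤ)) := by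
    have hcast : (d : ℝ) = (p : ℝ) ^ (n - 1) * ((p : ℝ) - 1) := by
      rw [hd]
      push_cast [Nat.cast_sub hpp.one_lt.le]
      ring
    have hexp : (n : ℤ) - 1 - (h : ℤ) = ((n - 1 : ℕ) : ℤ) - (h : ℤ) := by
      push_cast [Nat.cast_sub hn]
      ring
    have h1 : ((p:ℝ) ^ h) ≠ 0 := by positivity
    have h2 : (p:ℝ) - 1 ≠ 0 := by intro hc; linarith
    rw [hcast, u, hexp, zpow_sub₀ (ne_of_gt hp0), zpow_natCast, zpow_natCast]
    field_simp
  -- generic lower bound for terms with k ≠ d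
  have hterm_nonneg : ∀ k, k ≠ d → P.coeff k ≠ 0 →
      (0 : EReal) ≤ vp p (P.coeff k) + (((k : ℝ) * u p h : ℝ) : EReal) := by
    intro k hk hk0
    rw [vp, if_neg hk0, ← EReal.coe_add, ← EReal.coe_zero, EReal.coe_le_coe_iff]
    have h1 : 0 ≤ -Real.logb p ‖P.coeff k‖ := by
      rw [neg_nonneg]
      exact Real.logb_nonpos hp1 (norm_nonneg _) (hPk k hk)
    have h2 : 0 ≤ (k : ℝ) * u p h := by positivity
    linarith
  constructor
  · -- case h ≤ n - 1
    intro hh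
    have hexp0 : (0 : ℤ) ≤ (n : ℤ) - 1 - (h : ℤ) := by omega
    have hge1 : (1 : ℝ) ≤ (p : ℝ) ^ ((n : ℤ) - 1 - (h : ℤ)) := one_le_zpow₀ hp1.le hexp0
    apply le_antisymm
    · calc vh p P h ≤ vp p (P.coeff 0) + ((((0:ℕ) : ℝ) * u p h : ℝ) : EReal) := iInf_le _ 0
        _ = (0 : EReal) := by
            rw [hvp0, ← EReal.coe_add]
            norm_num
    · refine le_iInf fun k => ?_
      by_cases hk0 : P.coeff k = 0
      · rw [vp, if_pos hk0, EReal.top_add_coe]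
        exact le_top
      · by_cases hkd : k = d
        · subst hkd
          rw [hvpd, ← EReal.coe_add, ← EReal.coe_zero, EReal.coe_le_coe_iff]
          have : (d : ℝ) * u p h = (p : ℝ) ^ ((n : ℤ) - 1 - (h : ℤ)) := hdu
          linarith
        · exact hterm_nonneg k hkd hk0
  · -- case n ≤ h
    intro hh
    have hexpneg : (n : ℤ) - 1 - (h : ℤ) ≤ 0 := by omega
    have hle1 : (p : ℝ) ^ ((n : ℤ) - 1 - (h : ℤ)) ≤ 1 :=
      zpow_le_one_of_nonpos₀ hp1.le hexpneg
    apply le_antisymm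
    · calc vh p P h ≤ vp p (P.coeff d) + (((d : ℝ) * u p h : ℝ) : EReal) := iInf_le _ d
        _ = (((p : ℝ) ^ ((n : ℤ) - 1 - (h : ℤ)) - 1 : ℝ) : EReal) := by
            rw [hvpd, ← EReal.coe_add, hdu]
            exact congrArg _ (by ring)
    · refine le_iInf fun k => ?_
      by_cases hk0 : P.coeff k = 0
      · rw [vp, if_pos hk0, EReal.top_add_coe]
        exact le_top
      · by_cases hkd : k = d
        · subst hkd
          rw [hvpd, ← EReal.coe_add, EReal.coe_le_coe_iff, hdu]
          linarith
        · refine le_trans ?_ (hterm_nonneg k hkd hk0)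
          rw [← EReal.coe_zero, EReal.coe_le_coe_iff]
          linarith


end Stmt4
end

section
/- Let p be a prime, L a finite extension of ℚ_p, and K an algebraically closed field containing L, complete with respect to a valuation v_p extending the p-adic valuation. Let f = Σ_{n≥0} a_n T^n ∈ L[[T]] be a nonzero power series whose coefficients have valuations bounded below (equivalently, f ∈ O_L[[T]] ⊗_{O_L} L, with O_L the ring of integers of L). Then f converges at every x ∈ K with v_p(x) > 0, and the set of zeros {x ∈ K : v_p(x) > 0 and f(x) = 0} is finite. -/
open PowerSeries

section AuxZeroes

open IsUltrametricDist

variable {K : Type*} [NormedField K] [CompleteSpace K] [IsUltrametricDist K]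

omit [IsUltrametricDist K] in
lemma aux_summable {a : ℕ → K} {C : ℝ} (hC : ∀ n, ‖a n‖ ≤ C) {x : K} (hx : ‖x‖ < 1) :
    Summable (fun n : ℕ => a n * x ^ n) := by
  refine Summable.of_norm (Summable.of_nonneg_of_le (fun n => norm_nonneg _)
    (fun n => ?_) ((summable_geometric_of_lt_one (norm_nonneg x) hx).mul_left C))
  rw [norm_mul, norm_pow]
  exact mul_le_mul_of_nonneg_right (hC n) (by positivity)

omit [CompleteSpace K] in
lemma aux_tsum_norm_le {a : ℕ → K} {C : ℝ} (hC0 : 0 ≤ C) (hC : ∀ n, ‖a n‖ ≤ C)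
    {x : K} (hx : ‖x‖ ≤ 1) : ‖∑' n : ℕ, a n * x ^ n‖ ≤ C := by
  refine norm_tsum_le_of_forall_le_of_nonneg hC0 (fun n => ?_)
  rw [norm_mul, norm_pow]
  calc ‖a n‖ * ‖x‖ ^ n ≤ C * 1 ^ n := by
        refine mul_le_mul (hC n) (pow_le_pow_left₀ (norm_nonneg _) hx n) (by positivity) hC0
    _ = C := by simp

set_option maxHeartbeats 2000000 in
lemma key_finite : ∀ (N : ℕ) (a : ℕ → K), (∀ n, ‖a n‖ ≤ ‖a N‖) → a N ≠ 0 →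
    {x : K | ‖x‖ < 1 ∧ ∑' n : ℕ, a n * x ^ n = 0}.Finite := by
  intro N
  induction N with
  | zero =>
    intro a ha h0
    convert Set.finite_empty
    rw [Set.eq_empty_iff_forall_notMem]
    rintro x ⟨hx, hsum⟩
    have hA0 : (0 : ℝ) < ‖a 0‖ := norm_pos_iff.mpr h0
    have hs : Summable (fun n : ℕ => a n * x ^ n) := aux_summable ha hx
    rw [Summable.tsum_eq_zero_add hs] at hsum
    have htail : ‖∑' n : ℕ, a (n + 1) * x ^ (n + 1)‖ ≤ ‖a 0‖ * ‖x‖ := by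
      refine norm_tsum_le_of_forall_le_of_nonneg (by positivity) (fun n => ?_)
      rw [norm_mul, norm_pow]
      calc ‖a (n + 1)‖ * ‖x‖ ^ (n + 1) ≤ ‖a 0‖ * ‖x‖ ^ 1 :=
            mul_le_mul (ha (n + 1)) (pow_le_pow_of_le_one (norm_nonneg x) hx.le (by omega))
              (by positivity) (norm_nonneg _)
        _ = ‖a 0‖ * ‖x‖ := by rw [pow_one]
    have heq : ∑' n : ℕ, a (n + 1) * x ^ (n + 1) = -(a 0) := by
      rw [pow_zero, mul_one] at hsum
      linear_combination hsum
    rw [heq, norm_neg] at htail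
    nlinarith
  | succ N ih =>
    intro a ha h0
    rcases Set.eq_empty_or_nonempty
        {x : K | ‖x‖ < 1 ∧ ∑' n : ℕ, a n * x ^ n = 0} with h | ⟨x₀, hx₀, hsum0⟩
    · rw [h]; exact Set.finite_empty
    set A := ‖a (N + 1)‖ with hA
    have hA0 : (0 : ℝ) < A := norm_pos_iff.mpr h0
    set b : ℕ → K := fun i => ∑' j : ℕ, a (i + 1 + j) * x₀ ^ j with hb
    have hbsum : ∀ i, Summable (fun j : ℕ => a (i + 1 + j) * x₀ ^ j) :=
      fun i => aux_summable (fun j => ha _) hx₀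
    have hbnorm : ∀ i, ‖b i‖ ≤ A :=
      fun i => aux_tsum_norm_le hA0.le (fun j => ha _) hx₀.le
    have hbN : ‖b N‖ = A := by
      have hsplit : b N = a (N + 1) + ∑' j : ℕ, a (N + 1 + (j + 1)) * x₀ ^ (j + 1) := by
        have h1 := Summable.tsum_eq_zero_add (hbsum N)
        simp only [Nat.add_zero, pow_zero, mul_one] at h1
        exact h1
      have htail : ‖∑' j : ℕ, a (N + 1 + (j + 1)) * x₀ ^ (j + 1)‖ ≤ A * ‖x₀‖ := by
        refine norm_tsum_le_of_forall_le_of_nonneg (by positivity) (fun j => ?_)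
        rw [norm_mul, norm_pow]
        calc ‖a (N + 1 + (j + 1))‖ * ‖x₀‖ ^ (j + 1) ≤ A * ‖x₀‖ ^ 1 :=
              mul_le_mul (ha _) (pow_le_pow_of_le_one (norm_nonneg x₀) hx₀.le (by omega))
                (by positivity) hA0.le
          _ = A * ‖x₀‖ := by rw [pow_one]
      have hlt : ‖∑' j : ℕ, a (N + 1 + (j + 1)) * x₀ ^ (j + 1)‖ < ‖a (N + 1)‖ := by
        refine lt_of_le_of_lt htail ?_
        calc A * ‖x₀‖ < A * 1 := mul_lt_mul_of_pos_left hx₀ hA0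
          _ = A := mul_one A
      rw [hsplit, norm_add_eq_max_of_norm_ne_norm hlt.ne', max_eq_left hlt.le]
    have hbN0 : b N ≠ 0 := by
      intro h
      rw [h, norm_zero] at hbN
      exact hA0.ne hbN
    -- the factorization
    have hfact : ∀ x : K, ‖x‖ < 1 →
        ∑' n : ℕ, a n * x ^ n = (x - x₀) * ∑' i : ℕ, b i * x ^ i := by
      intro x hx
      set F : ℕ × ℕ → K := fun q => a (q.1 + 1 + q.2) * x₀ ^ q.2 * x ^ q.1 with hF
      set G : ℕ × ℕ → K := fun q => a (q.1 + q.2) * x₀ ^ q.2 * x ^ q.1 with hG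
      have hgeo : Summable (fun q : ℕ × ℕ => (A * ‖x‖ ^ q.1) * ‖x₀‖ ^ q.2) :=
        Summable.mul_of_nonneg ((summable_geometric_of_lt_one (norm_nonneg x) hx).mul_left A)
          (summable_geometric_of_lt_one (norm_nonneg x₀) hx₀)
          (fun i => by positivity) (fun j => by positivity)
      have hFsum : Summable F := by
        refine Summable.of_norm (Summable.of_nonneg_of_le (fun q => norm_nonneg _)
          (fun q => ?_) hgeo)
        rw [hF]
        simp only [norm_mul, norm_pow]
        calc ‖a (q.1 + 1 + q.2)‖ * ‖x₀‖ ^ q.2 * ‖x‖ ^ q.1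
            ≤ A * ‖x₀‖ ^ q.2 * ‖x‖ ^ q.1 := by gcongr; exact ha _
          _ = (A * ‖x‖ ^ q.1) * ‖x₀‖ ^ q.2 := by ring
      have hGsum : Summable G := by
        refine Summable.of_norm (Summable.of_nonneg_of_le (fun q => norm_nonneg _)
          (fun q => ?_) hgeo)
        rw [hG]
        simp only [norm_mul, norm_pow]
        calc ‖a (q.1 + q.2)‖ * ‖x₀‖ ^ q.2 * ‖x‖ ^ q.1
            ≤ A * ‖x₀‖ ^ q.2 * ‖x‖ ^ q.1 := by gcongr; exact ha _
          _ = (A * ‖x‖ ^ q.1) * ‖x₀‖ ^ q.2 := by ring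
      have hFinner : ∀ i, Summable (fun j : ℕ => F (i, j)) :=
        fun i => (hbsum i).mul_right (x ^ i)
      have hGinner : ∀ i, Summable (fun j : ℕ => G (i, j)) :=
        fun i => (aux_summable (fun j => ha (i + j)) hx₀).mul_right (x ^ i)
      set g : ℕ → K := fun i => ∑' j : ℕ, G (i, j) with hg
      have hgnorm : ∀ i, ‖g i‖ ≤ A * ‖x‖ ^ i := by
        intro i
        rw [hg]
        simp only
        have : ∑' j : ℕ, G (i, j) = (∑' j : ℕ, a (i + j) * x₀ ^ j) * x ^ i := by
          rw [← tsum_mul_right]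
        rw [this, norm_mul, norm_pow]
        gcongr
        exact aux_tsum_norm_le hA0.le (fun j => ha _) hx₀.le
      have hgsum : Summable g := by
        refine Summable.of_norm (Summable.of_nonneg_of_le (fun i => norm_nonneg _)
          (fun i => hgnorm i)
          ((summable_geometric_of_lt_one (norm_nonneg x) hx).mul_left A))
      have hg0 : g 0 = 0 := by
        rw [hg]
        simp only
        have : ∀ j : ℕ, G (0, j) = a j * x₀ ^ j := by
          intro j
          rw [hG]
          simp
        rw [tsum_congr this, hsum0]
      set T := ∑' q : ℕ × ℕ, F q with hT
      set W := ∑' q : ℕ × ℕ, G q with hW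
      have hbT : ∑' i : ℕ, b i * x ^ i = T := by
        rw [hT, Summable.tsum_prod' hFsum hFinner]
        refine tsum_congr fun i => ?_
        rw [hb]
        simp only
        rw [← tsum_mul_right]
      have hWg : W = ∑' i : ℕ, g i := by
        rw [hW, Summable.tsum_prod' hGsum hGinner]
      -- x * T = W
      have hxT : x * T = W := by
        have hxF : ∀ q : ℕ × ℕ, x * F q = G (q.1 + 1, q.2) := by
          intro q
          rw [hF, hG]
          simp only
          ring
        have hHsum : Summable (fun q : ℕ × ℕ => G (q.1 + 1, q.2)) := by
          refine Summable.congr (hFsum.mul_left x) hxF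
        rw [hT, ← tsum_mul_left, tsum_congr hxF, Summable.tsum_prod' hHsum (fun i => hGinner (i + 1))]
        have : ∑' (i : ℕ) (j : ℕ), G (i + 1, j) = ∑' i : ℕ, g (i + 1) := rfl
        rw [this, hWg, Summable.tsum_eq_zero_add hgsum, hg0, zero_add]
      -- x₀ * T = W - ∑' n, a n * x ^ n
      have hx₀T : x₀ * T = W - ∑' n : ℕ, a n * x ^ n := by
        have hx₀F : ∀ q : ℕ × ℕ, x₀ * F q = G (q.1, q.2 + 1) := by
          intro q
          rw [hF, hG]
          simp only
          have : q.1 + 1 + q.2 = q.1 + (q.2 + 1) := by omega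
          rw [this]
          ring
        have hHsum : Summable (fun q : ℕ × ℕ => G (q.1, q.2 + 1)) :=
          Summable.congr (hFsum.mul_left x₀) hx₀F
        have hG0sum : Summable (fun i : ℕ => G (i, 0)) := by
          have : ∀ i : ℕ, G (i, 0) = (a i * x₀ ^ 0) * x ^ i := by
            intro i; rw [hG]; simp
          refine Summable.congr ?_ (fun i => (this i).symm)
          exact (aux_summable (fun i => by
            simpa using ha i : ∀ n, ‖a n * x₀ ^ 0‖ ≤ A) hx)
        have hinner : ∀ i : ℕ, ∑' j : ℕ, G (i, j + 1) = g i - G (i, 0) := by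
          intro i
          have := Summable.tsum_eq_zero_add (hGinner i)
          rw [hg]
          simp only
          rw [this]
          ring
        rw [hT, ← tsum_mul_left, tsum_congr hx₀F,
          Summable.tsum_prod' hHsum (fun i => (hGinner i).comp_injective (add_left_injective 1))]
        have : ∑' (i : ℕ) (j : ℕ), G (i, j + 1) = ∑' i : ℕ, (g i - G (i, 0)) :=
          tsum_congr hinner
        rw [this, Summable.tsum_sub hgsum hG0sum, hWg]
        congr 1
        refine tsum_congr fun i => ?_
        rw [hG]
        simp
      rw [hbT, sub_mul, hxT, hx₀T]
      ring
    -- conclude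
    have hsub : {x : K | ‖x‖ < 1 ∧ ∑' n : ℕ, a n * x ^ n = 0} ⊆
        insert x₀ {x : K | ‖x‖ < 1 ∧ ∑' i : ℕ, b i * x ^ i = 0} := by
      rintro x ⟨hx, hsx⟩
      rcases eq_or_ne x x₀ with rfl | hne
      · exact Set.mem_insert _ _
      · refine Set.mem_insert_of_mem _ ⟨hx, ?_⟩
        have hzero := hfact x hx
        rw [hsx] at hzero
        rcases mul_eq_zero.mp hzero.symm with h | h
        · exact absurd (sub_eq_zero.mp h) hne
        · exact h
    exact Set.Finite.subset
      ((ih b (fun i => (hbnorm i).trans_eq hbN.symm) hbN0).insert x₀) hsub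

lemma exists_dominant {L : Type*} [NormedField L] [ProperSpace L] [IsUltrametricDist L]
    (c : ℕ → L) {C : ℝ} (hC : ∀ n, ‖c n‖ ≤ C) {n₀ : ℕ} (h0 : c n₀ ≠ 0) :
    ∃ N, c N ≠ 0 ∧ ∀ n, ‖c n‖ ≤ ‖c N‖ := by
  have hbd : Bornology.IsBounded (Set.range c) := by
    refine Bornology.IsBounded.subset (Metric.isBounded_closedBall (x := (0 : L)) (r := C)) ?_
    rintro _ ⟨n, rfl⟩
    simpa [Metric.mem_closedBall, dist_eq_norm] using hC n
  have hcpt : IsCompact (closure (Set.range c)) := hbd.isCompact_closure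
  obtain ⟨y, hy, hmax⟩ := hcpt.exists_isMaxOn
    ⟨c 0, subset_closure (Set.mem_range_self 0)⟩ (continuous_norm.continuousOn)
  have hmax' : ∀ n, ‖c n‖ ≤ ‖y‖ := fun n => hmax (subset_closure (Set.mem_range_self n))
  have hy0 : (0 : ℝ) < ‖y‖ := lt_of_lt_of_le (norm_pos_iff.mpr h0) (hmax' n₀)
  obtain ⟨z, ⟨N, rfl⟩, hz⟩ := Metric.mem_closure_iff.mp hy ‖y‖ hy0
  refine ⟨N, ?_, ?_⟩
  · intro h
    rw [h, dist_zero_right] at hz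
    exact absurd hz (lt_irrefl _)
  · intro n
    have hdiff : ‖c N - y‖ < ‖y‖ := by
      rwa [← dist_eq_norm, dist_comm]
    have : ‖c N‖ = ‖y‖ := by
      have := IsUltrametricDist.norm_add_eq_max_of_norm_ne_norm
        (x := y) (y := c N - y) hdiff.ne'
      rw [add_sub_cancel, max_eq_left hdiff.le] at this
      exact this
    rw [this]
    exact hmax' n

end AuxZeroes

/-- Let `p` be a prime, `L` a finite extension of `ℚ_p`, and `K` an
algebraically closed field containing `L`, complete with respect to a valuation
(ultrametric absolute value) extending the `p`-adic one.  Let `f = ∑ a_n T^n ∈ L[[T]]`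
be a nonzero power series whose coefficients have valuations bounded below (equivalently,
norms bounded above, i.e. `f ∈ O_L[[T]] ⊗_{O_L} L`).  Then `f` converges at every
`x ∈ K` with `v_p(x) > 0` (i.e. `‖x‖ < 1`), and the set of its zeros on the open unit
disk of `K` is finite. -/
theorem bounded_power_series_finitely_many_zeroes
    (p : ℕ) [Fact p.Prime] (L : Type*) [NormedField L] [NormedAlgebra ℚ_[p] L]
    [FiniteDimensional ℚ_[p] L]
    (K : Type*) [NormedField K] [NormedAlgebra L K] [IsAlgClosed K] [CompleteSpace K]
    [IsUltrametricDist K]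
    (f : PowerSeries L) (hf0 : f ≠ 0)
    (hbdd : ∃ C : ℝ, ∀ n : ℕ, ‖(PowerSeries.coeff n) f‖ ≤ C) :
    (∀ x : K, ‖x‖ < 1 →
      Summable (fun n : ℕ => algebraMap L K ((PowerSeries.coeff n) f) * x ^ n)) ∧
    {x : K | ‖x‖ < 1 ∧
      ∑' n : ℕ, algebraMap L K ((PowerSeries.coeff n) f) * x ^ n = 0}.Finite := by
  obtain ⟨C, hC⟩ := hbdd
  have hnormmap : ∀ y : L, ‖algebraMap L K y‖ = ‖y‖ := fun y => norm_algebraMap' K y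
  haveI : IsUltrametricDist L := by
    constructor
    intro x y z
    have key : ∀ u v : L, dist u v = dist (algebraMap L K u) (algebraMap L K v) := by
      intro u v
      rw [dist_eq_norm, dist_eq_norm, ← map_sub, hnormmap]
    rw [key x z, key x y, key y z]
    exact IsUltrametricDist.dist_triangle_max _ _ _
  haveI : ProperSpace L := FiniteDimensional.proper ℚ_[p] L
  have hne : ∃ n, (PowerSeries.coeff n) f ≠ 0 := by
    by_contra h
    push_neg at h
    exact hf0 (PowerSeries.ext fun n => by rw [h n, map_zero])
  obtain ⟨n₀, hn₀⟩ := hne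
  obtain ⟨N, hN0, hNdom⟩ := exists_dominant (fun n => (PowerSeries.coeff n) f) hC hn₀
  set a : ℕ → K := fun n => algebraMap L K ((PowerSeries.coeff n) f) with ha
  have hanorm : ∀ n, ‖a n‖ = ‖(PowerSeries.coeff n) f‖ := fun n => hnormmap _
  constructor
  · intro x hx
    exact aux_summable (C := C) (fun n => by rw [hanorm]; exact hC n) hx
  · refine key_finite N a (fun n => ?_) ?_
    · rw [hanorm, hanorm]
      exact hNdom n
    · intro h
      exact hN0 ((map_eq_zero_iff (algebraMap L K) (algebraMap L K).injective).mp h)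
end

section
/- Let p be a prime, L a complete extension of ℚ_p, and r ∈ ℝ_{≥0}. A formal power series f ∈ L[[X]] lies in R⁺_r if and only if inf_{h≥0} ( v_h(f) + r·h ) > −∞ (i.e. the infimum over nonnegative integers h of v_h(f) + r·h is not −∞). -/
namespace Stmt10

open Filter PowerSeries

open scoped Classical

/-- The valuation `v_p(x) = -log_p ‖x‖` of `L` extending the `p`-adic valuation,
with value `⊤` at `0`. -/
noncomputable def vp (p : ℕ) {L : Type*} [NormedField L] (x : L) : EReal :=
  if x = 0 then ⊤ else ((-Real.logb p ‖x‖ : ℝ) : EReal)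

/-- `u_h = 1 / (p^h (p - 1))`. -/
noncomputable def u (p : ℕ) (h : ℕ) : ℝ := 1 / ((p : ℝ) ^ h * ((p : ℝ) - 1))

/-- The Gauss valuation `v_h(f) = inf_k (v_p(a_k) + k u_h)` of `f = ∑ a_k X^k ∈ L[[X]]`. -/
noncomputable def vh (p : ℕ) {L : Type*} [NormedField L] (f : PowerSeries L) (h : ℕ) :
    EReal :=
  ⨅ k : ℕ, vp p ((PowerSeries.coeff k) f) + (((k : ℝ) * u p h : ℝ) : EReal)

/-- `ℓ(n) = min {m : n < p^m}`. -/
noncomputable def ell (p n : ℕ) : ℕ := sInf {m : ℕ | n < p ^ m}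

/-- `R⁺_r`: the set of `f = ∑ a_n X^n ∈ L[[X]]` such that `v_p(a_n) + r ℓ(n)` is
bounded below. -/
def Rplus (p : ℕ) (L : Type*) [NormedField L] (r : ℝ) : Set (PowerSeries L) :=
  {f | ∃ B : ℝ, ∀ k : ℕ, (PowerSeries.coeff k) f ≠ 0 →
    B ≤ -Real.logb p ‖(PowerSeries.coeff k) f‖ + r * (ell p k)}

lemma nat_sq_le_two_pow (n : ℕ) : n ^ 2 ≤ 2 ^ (n + 1) := by
  induction n with
  | zero => norm_num
  | succ n ih =>
    have h2 : n < 2 ^ n := Nat.lt_two_pow_self (n := n)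
    have e1 : 2 ^ (n + 2) = 2 * 2 ^ (n + 1) := by ring
    have e2 : 2 ^ (n + 1) = 2 * 2 ^ n := by ring
    nlinarith [ih, h2]

lemma ell_spec (p : ℕ) (hp : 2 ≤ p) (k : ℕ) : k < p ^ ell p k := by
  have hne : {m : ℕ | k < p ^ m}.Nonempty := ⟨k, Nat.lt_pow_self (n := k) hp⟩
  exact Nat.sInf_mem hne

lemma pow_le_of_lt_ell (p : ℕ) (k m : ℕ) (hm : m < ell p k) : p ^ m ≤ k := by
  have := Nat.notMem_of_lt_sInf (s := {m : ℕ | k < p ^ m}) hm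
  simpa [Set.mem_setOf_eq, not_lt] using this

lemma key (p : ℕ) (hp : 2 ≤ p) (r : ℝ) (hr : 0 ≤ r) (k h : ℕ) :
    r * (ell p k) ≤ (k : ℝ) * u p h + r * h + 4 * r ^ 2 * ((p : ℝ) - 1) := by
  have hp1 : (2 : ℝ) ≤ (p : ℝ) := by exact_mod_cast hp
  have hpm : (0 : ℝ) < (p : ℝ) - 1 := by linarith
  have hph : (0 : ℝ) < (p : ℝ) ^ h := by positivity
  have hu : 0 < u p h := by unfold u; positivity
  have hC : 0 ≤ 4 * r ^ 2 * ((p : ℝ) - 1) := by positivity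
  by_cases hle : ell p k ≤ h
  · have h1 : (ell p k : ℝ) ≤ (h : ℝ) := by exact_mod_cast hle
    have h2 : 0 ≤ (k : ℝ) * u p h := by positivity
    nlinarith
  · push_neg at hle
    set l := ell p k with hl
    obtain ⟨n, hn⟩ : ∃ n, l = h + n + 1 := ⟨l - h - 1, by omega⟩
    have hk : (p : ℝ) ^ (h + n) ≤ (k : ℝ) := by
      exact_mod_cast pow_le_of_lt_ell p k (h + n) (by omega)
    have hku : (p : ℝ) ^ n / ((p : ℝ) - 1) ≤ (k : ℝ) * u p h := by
      have e : (k : ℝ) * u p h = (k : ℝ) / ((p : ℝ) ^ h * ((p : ℝ) - 1)) := by rw [u]; ring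
      rw [e, div_le_div_iff₀ hpm (by positivity)]
      rw [pow_add] at hk
      nlinarith [hk, hph, hpm]
    have h2p : (2 : ℝ) ^ n ≤ (p : ℝ) ^ n := by
      exact pow_le_pow_left₀ (by norm_num) hp1 n
    have hmain : r * ((n : ℝ) + 1) ≤ (2 : ℝ) ^ n / ((p : ℝ) - 1) + 4 * r ^ 2 * ((p : ℝ) - 1) := by
      have h2pos : (0 : ℝ) < (2 : ℝ) ^ n := by positivity
      by_cases hm : ((n : ℝ) + 1) ≤ 4 * r * ((p : ℝ) - 1)
      · nlinarith [div_nonneg h2pos.le hpm.le]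
      · push_neg at hm
        have hsq : ((n : ℝ) + 1) ^ 2 ≤ 4 * (2 : ℝ) ^ n := by
          have := nat_sq_le_two_pow (n + 1)
          have h' : (((n + 1) ^ 2 : ℕ) : ℝ) ≤ ((2 ^ (n + 2) : ℕ) : ℝ) := by exact_mod_cast this
          push_cast at h'
          have e4 : (2:ℝ) ^ (n + 2) = 4 * 2 ^ n := by rw [pow_add]; ring
          linarith [h']
        rw [div_add' _ _ _ hpm.ne', le_div_iff₀ hpm]
        nlinarith [sq_nonneg ((n:ℝ) + 1), hr, hm]
    have hln : (l : ℝ) = (h : ℝ) + (n : ℝ) + 1 := by exact_mod_cast congrArg (Nat.cast : ℕ → ℝ) hn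
    have hdiv : (2:ℝ) ^ n / ((p:ℝ) - 1) ≤ (p:ℝ) ^ n / ((p:ℝ)-1) := by gcongr
    have hln' : (ell p k : ℝ) = (h : ℝ) + (n : ℝ) + 1 := by rw [← hl]; exact hln
    rw [hln']
    linarith [hku, hdiv, hmain]
/-- Let `p` be a prime, `L` a complete (ultrametric) extension of
`ℚ_p`, and `r ≥ 0`.  A formal power series `f ∈ L[[X]]` lies in `R⁺_r` if and only if
`inf_{h ≥ 0} (v_h(f) + r h) > -∞`. -/
theorem mem_Rplus_iff_gauss_valuations_bounded
    (p : ℕ) [Fact p.Prime] (L : Type*) [NormedField L] [NormedAlgebra ℚ_[p] L]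
    [CompleteSpace L] [IsUltrametricDist L] (r : ℝ) (hr : 0 ≤ r) (f : PowerSeries L) :
    f ∈ Rplus p L r ↔ ⊥ < ⨅ h : ℕ, vh p f h + (((r * (h : ℝ)) : ℝ) : EReal) := by
  have hp2 : 2 ≤ p := (Fact.out : p.Prime).two_le
  have hp1 : (2 : ℝ) ≤ (p : ℝ) := by exact_mod_cast hp2
  have hpm : (0 : ℝ) < (p : ℝ) - 1 := by linarith
  constructor
  · rintro ⟨B, hB⟩
    set C : ℝ := 4 * r ^ 2 * ((p : ℝ) - 1) with hCdef
    refine lt_of_lt_of_le (EReal.bot_lt_coe (B - C)) (le_iInf fun h => ?_)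
    have step : ((B - C - r * h : ℝ) : EReal) ≤ vh p f h := by
      rw [vh]
      refine le_iInf fun k => ?_
      by_cases hk : (PowerSeries.coeff k) f = 0
      · rw [vp, if_pos hk, EReal.top_add_coe]
        exact le_top
      · rw [vp, if_neg hk, ← EReal.coe_add, EReal.coe_le_coe_iff]
        have h1 := hB k hk
        have h2 := key p hp2 r hr k h
        linarith
    calc ((B - C : ℝ) : EReal) = ((B - C - r * h : ℝ) : EReal) + ((r * h : ℝ) : EReal) := by
          rw [← EReal.coe_add]; norm_num
      _ ≤ vh p f h + ((r * h : ℝ) : EReal) := add_le_add_left step _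
  · intro hbot
    obtain ⟨c, -, hc⟩ := EReal.exists_between_coe_real hbot
    refine ⟨c - 1 / ((p : ℝ) - 1), fun k hk => ?_⟩
    have h1 : (c : EReal) ≤ vh p f (ell p k) + ((r * (ell p k) : ℝ) : EReal) :=
      hc.le.trans (iInf_le _ (ell p k))
    have h2 : vh p f (ell p k) ≤
        vp p ((PowerSeries.coeff k) f) + (((k : ℝ) * u p (ell p k) : ℝ) : EReal) :=
      iInf_le _ k
    have h3 := h1.trans (add_le_add_left h2 _)
    rw [vp, if_neg hk, ← EReal.coe_add, ← EReal.coe_add, EReal.coe_le_coe_iff] at h3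
    have hkp : (k : ℝ) < (p : ℝ) ^ ell p k := by exact_mod_cast ell_spec p hp2 k
    have hub : (k : ℝ) * u p (ell p k) ≤ 1 / ((p : ℝ) - 1) := by
      have e : (k : ℝ) * u p (ell p k) = (k : ℝ) / ((p : ℝ) ^ ell p k * ((p : ℝ) - 1)) := by
        rw [u]; ring
      rw [e, div_le_div_iff₀ (by positivity) hpm]
      nlinarith [hkp, hpm, (by positivity : (0:ℝ) < (p:ℝ) ^ ell p k)]
    linarith

end Stmt10
end

section
/- Let p be a prime, L a complete extension of ℚ_p, and r ∈ ℝ_{≥0}. The space R⁺_r, equipped with the valuation v_r(f) = inf_{h≥0} ( v_h(f) + r·h ) (equivalently, the norm p^{−v_r(f)}), is a Banach space over L: every Cauchy sequence in R⁺_r with respect to this norm converges to an element of R⁺_r. -/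
namespace Stmt11

open Filter PowerSeries
open scoped Topology

open scoped Classical

/-- The valuation `v_p(x) = -log_p ‖x‖` of `L` extending the `p`-adic valuation,
with value `⊤` at `0`. -/
noncomputable def vp (p : ℕ) {L : Type*} [NormedField L] (x : L) : EReal :=
  if x = 0 then ⊤ else ((-Real.logb p ‖x‖ : ℝ) : EReal)

/-- `u_h = 1 / (p^h (p - 1))`. -/
noncomputable def u (p : ℕ) (h : ℕ) : ℝ := 1 / ((p : ℝ) ^ h * ((p : ℝ) - 1))

/-- The Gauss valuation `v_h(f) = inf_k (v_p(a_k) + k u_h)` of `f = ∑ a_k X^k ∈ L[[X]]`. -/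
noncomputable def vh (p : ℕ) {L : Type*} [NormedField L] (f : PowerSeries L) (h : ℕ) :
    EReal :=
  ⨅ k : ℕ, vp p ((PowerSeries.coeff k) f) + (((k : ℝ) * u p h : ℝ) : EReal)

/-- `ℓ(n) = min {m : n < p^m}`. -/
noncomputable def ell (p n : ℕ) : ℕ := sInf {m : ℕ | n < p ^ m}

/-- `R⁺_r`: the set of `f = ∑ a_n X^n ∈ L[[X]]` such that `v_p(a_n) + r ℓ(n)` is
bounded below. -/
def Rplus (p : ℕ) (L : Type*) [NormedField L] (r : ℝ) : Set (PowerSeries L) :=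
  {f | ∃ B : ℝ, ∀ k : ℕ, (PowerSeries.coeff k) f ≠ 0 →
    B ≤ -Real.logb p ‖(PowerSeries.coeff k) f‖ + r * (ell p k)}

/-- The valuation `v_r(f) = inf_{h ≥ 0} (v_h(f) + r h)` on `R⁺_r` (corresponding to the
norm `p^{-v_r(f)}`). -/
noncomputable def vr (p : ℕ) {L : Type*} [NormedField L] (r : ℝ) (f : PowerSeries L) :
    EReal :=
  ⨅ h : ℕ, vh p f h + (((r * (h : ℝ)) : ℝ) : EReal)

section aux

variable (p : ℕ) [Fact p.Prime] {L : Type*} [NormedField L]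

lemma p_gt_one : (1:ℝ) < p := by exact_mod_cast (Fact.out : p.Prime).one_lt

lemma u_pos (h : ℕ) : 0 < u p h := by
  have h1 : (1:ℝ) < p := p_gt_one p
  exact div_pos one_pos (mul_pos (pow_pos (by linarith) h) (by linarith))

/-- Characterization of `C ≤ vr p r f` in terms of the coefficients. -/
lemma le_vr_iff {r : ℝ} {C : ℝ} {f : PowerSeries L} :
    (C : EReal) ≤ vr p r f ↔
      ∀ h k : ℕ, (PowerSeries.coeff k) f ≠ 0 →
        C ≤ -Real.logb p ‖(PowerSeries.coeff k) f‖ + (k : ℝ) * u p h + r * h := by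
  unfold vr vh vp
  rw [le_iInf_iff]
  constructor
  · intro H h k hk
    have h1 := H h
    have h2 : (⨅ k : ℕ, (if (PowerSeries.coeff k) f = 0 then (⊤:EReal)
          else ((-Real.logb p ‖(PowerSeries.coeff k) f‖ : ℝ) : EReal))
          + (((k : ℝ) * u p h : ℝ) : EReal))
        ≤ (if (PowerSeries.coeff k) f = 0 then (⊤:EReal)
          else ((-Real.logb p ‖(PowerSeries.coeff k) f‖ : ℝ) : EReal))
          + (((k : ℝ) * u p h : ℝ) : EReal) := iInf_le _ k
    have h3 := le_trans h1 (add_le_add_left h2 _)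
    rw [if_neg hk] at h3
    rw [← EReal.coe_add, ← EReal.coe_add] at h3
    exact_mod_cast h3
  · intro H h
    have key : (((C - r * h : ℝ)) : EReal) ≤
        ⨅ k : ℕ, (if (PowerSeries.coeff k) f = 0 then (⊤:EReal)
          else ((-Real.logb p ‖(PowerSeries.coeff k) f‖ : ℝ) : EReal))
          + (((k : ℝ) * u p h : ℝ) : EReal) := by
      refine le_iInf fun k => ?_
      by_cases hk : (PowerSeries.coeff k) f = 0
      · rw [if_pos hk, EReal.top_add_coe]; exact le_top
      · rw [if_neg hk, ← EReal.coe_add]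
        exact_mod_cast by linarith [H h k hk]
    calc (C : EReal) = (((C - r * h : ℝ)) : EReal) + ((r * h : ℝ) : EReal) := by
          rw [← EReal.coe_add]; norm_num
      _ ≤ _ := add_le_add_left key _

lemma norm_le_of_le_vr {r C : ℝ} {f : PowerSeries L} (H : (C : EReal) ≤ vr p r f)
    (h k : ℕ) :
    ‖(PowerSeries.coeff k) f‖ ≤ (p:ℝ) ^ ((k:ℝ) * u p h + r * h - C) := by
  by_cases hk : (PowerSeries.coeff k) f = 0
  · rw [hk, norm_zero]
    exact Real.rpow_nonneg (by linarith [p_gt_one p]) _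
  · have hx : 0 < ‖(PowerSeries.coeff k) f‖ := norm_pos_iff.mpr hk
    have h1 := (le_vr_iff p).mp H h k hk
    have hlog : Real.logb p ‖(PowerSeries.coeff k) f‖
        ≤ (k:ℝ) * u p h + r * h - C := by linarith
    exact (Real.logb_le_iff_le_rpow (p_gt_one p) hx).mp hlog

lemma le_vr_of_norm_le {r C : ℝ} {f : PowerSeries L}
    (H : ∀ h k : ℕ, ‖(PowerSeries.coeff k) f‖ ≤ (p:ℝ) ^ ((k:ℝ) * u p h + r * h - C)) :
    (C : EReal) ≤ vr p r f := by
  rw [le_vr_iff]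
  intro h k hk
  have hx : 0 < ‖(PowerSeries.coeff k) f‖ := norm_pos_iff.mpr hk
  have h1 := (Real.logb_le_iff_le_rpow (p_gt_one p) hx).mpr (H h k)
  linarith

lemma lt_pow_ell (k : ℕ) : k < p ^ ell p k := by
  have hp : 2 ≤ p := (Fact.out : p.Prime).two_le
  have hk : k < p ^ k := Nat.lt_pow_self (by omega : 1 < p)
  exact Nat.sInf_mem (⟨k, hk⟩ : {m : ℕ | k < p ^ m}.Nonempty)

lemma mul_u_ell_le_one (k : ℕ) : (k:ℝ) * u p (ell p k) ≤ 1 := by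
  have hp1 : (1:ℝ) < p := p_gt_one p
  have h1 : (k:ℝ) ≤ (p:ℝ) ^ (ell p k) := by
    exact_mod_cast (lt_pow_ell p k).le
  have hpow : (0:ℝ) < (p:ℝ) ^ (ell p k) := pow_pos (by linarith) _
  have hp2 : (2:ℝ) ≤ p := by exact_mod_cast (Fact.out : p.Prime).two_le
  unfold u
  rw [mul_one_div, div_le_one (mul_pos hpow (by linarith))]
  nlinarith

end aux

/-- Let `p` be a prime, `L` a complete (ultrametric) extension of
`ℚ_p`, and `r ≥ 0`.  The space `R⁺_r`, equipped with the valuation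
`v_r(f) = inf_{h ≥ 0} (v_h(f) + r h)` (equivalently the norm `p^{-v_r(f)}`), is a Banach
space over `L`: every Cauchy sequence in `R⁺_r` (i.e. `v_r(F m - F n) → ∞`) converges to
an element of `R⁺_r` (i.e. there is `G ∈ R⁺_r` with `v_r(F n - G) → ∞`). -/
theorem Rplus_is_banach
    (p : ℕ) [Fact p.Prime] (L : Type*) [NormedField L] [NormedAlgebra ℚ_[p] L]
    [CompleteSpace L] [IsUltrametricDist L] (r : ℝ) (hr : 0 ≤ r)
    (F : ℕ → PowerSeries L) (hF : ∀ n, F n ∈ Rplus p L r)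
    (hcauchy : ∀ C : ℝ, ∃ N : ℕ, ∀ m ≥ N, ∀ n ≥ N,
      (C : EReal) ≤ vr p r (F m - F n)) :
    ∃ G ∈ Rplus p L r, ∀ C : ℝ, ∃ N : ℕ, ∀ n ≥ N, (C : EReal) ≤ vr p r (F n - G) := by
  have hp1 : (1:ℝ) < p := p_gt_one p
  have hp0 : (0:ℝ) < p := by linarith
  -- the coefficient sequences are Cauchy
  have hcau : ∀ k : ℕ, CauchySeq (fun n => (PowerSeries.coeff k) (F n)) := by
    intro k
    rw [Metric.cauchySeq_iff]
    intro ε hε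
    obtain ⟨N, hN⟩ := hcauchy ((k:ℝ) * u p 0 - Real.logb p ε + 1)
    refine ⟨N, fun m hm n hn => ?_⟩
    have hb := norm_le_of_le_vr p (hN m hm n hn) 0 k
    rw [dist_eq_norm, ← map_sub]
    refine lt_of_le_of_lt hb ?_
    have heq : (k:ℝ) * u p 0 + r * ((0:ℕ):ℝ) - ((k:ℝ) * u p 0 - Real.logb p ε + 1)
        = Real.logb p ε - 1 := by push_cast; ring
    rw [heq, Real.rpow_sub hp0, Real.rpow_logb hp0 (by linarith) hε, Real.rpow_one]
    exact div_lt_self hε hp1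
  have hglim : ∀ k : ℕ, ∃ x : L, Tendsto (fun n => (PowerSeries.coeff k) (F n))
      atTop (𝓝 x) := fun k => cauchySeq_tendsto_of_complete (hcau k)
  choose g hg using hglim
  set G : PowerSeries L := PowerSeries.mk g with hG
  have hcoeffG : ∀ k, (PowerSeries.coeff k) G = g k := fun k => coeff_mk k g
  -- convergence to G
  have hconv : ∀ C : ℝ, ∃ N : ℕ, ∀ n ≥ N, (C : EReal) ≤ vr p r (F n - G) := by
    intro C
    obtain ⟨N, hN⟩ := hcauchy C
    refine ⟨N, fun n hn => ?_⟩
    apply le_vr_of_norm_le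
    intro h k
    have hlim : Tendsto (fun m => ‖(PowerSeries.coeff k) (F n)
          - (PowerSeries.coeff k) (F m)‖) atTop
        (𝓝 ‖(PowerSeries.coeff k) (F n) - g k‖) :=
      (tendsto_const_nhds.sub (hg k)).norm
    have hev : ∀ᶠ m in atTop, ‖(PowerSeries.coeff k) (F n)
        - (PowerSeries.coeff k) (F m)‖ ≤ (p:ℝ) ^ ((k:ℝ) * u p h + r * h - C) := by
      filter_upwards [eventually_ge_atTop N] with m hm
      have hb := norm_le_of_le_vr p (hN n hn m hm) h k
      rwa [map_sub] at hb
    have hle := le_of_tendsto hlim hev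
    rwa [map_sub, hcoeffG k]
  refine ⟨G, ?_, hconv⟩
  -- G belongs to R⁺_r
  obtain ⟨N₀, hN₀⟩ := hconv 0
  obtain ⟨B, hB⟩ := hF N₀
  refine ⟨min B (-1 - 1 / ((p:ℝ) - 1)), fun k hk => ?_⟩
  have hpos : 0 < ‖(PowerSeries.coeff k) G‖ := norm_pos_iff.mpr hk
  set a := (PowerSeries.coeff k) (F N₀) with ha
  set d := (PowerSeries.coeff k) (F N₀ - G) with hdd
  have hd : d = a - (PowerSeries.coeff k) G := by rw [hdd, map_sub]
  have hGad : (PowerSeries.coeff k) G = a - d := by rw [hd]; ring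
  have hmax : ‖(PowerSeries.coeff k) G‖ ≤ max ‖a‖ ‖d‖ := by
    rw [hGad, sub_eq_add_neg]
    have := IsUltrametricDist.norm_add_le_max a (-d)
    rwa [norm_neg] at this
  rcases le_max_iff.mp hmax with hca | hcd
  · -- dominated by the coefficient of F N₀
    have hane : a ≠ 0 := by
      intro h0
      rw [h0, norm_zero] at hca
      linarith
    have hBk := hB k hane
    have hlog := Real.logb_le_logb_of_le hp1 hpos hca
    have hmB : min B (-1 - 1 / ((p:ℝ) - 1)) ≤ B := min_le_left _ _
    rw [← ha] at hBk
    linarith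
  · -- dominated by the coefficient of F N₀ - G
    have hdb := norm_le_of_le_vr p (hN₀ N₀ le_rfl) (ell p k) k
    rw [← hdd] at hdb
    have hle1 : (k:ℝ) * u p (ell p k) + r * (ell p k) - 0 ≤ 1 + r * (ell p k) := by
      have := mul_u_ell_le_one p k
      linarith
    have hdb2 : ‖d‖ ≤ (p:ℝ) ^ (1 + r * ((ell p k : ℕ):ℝ)) :=
      le_trans hdb (Real.rpow_le_rpow_left_iff hp1 |>.mpr hle1)
    have hlog : Real.logb p ‖(PowerSeries.coeff k) G‖ ≤ 1 + r * ((ell p k : ℕ):ℝ) := by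
      exact (Real.logb_le_iff_le_rpow hp1 hpos).mpr (le_trans hcd hdb2)
    have : min B (-1 - 1 / ((p:ℝ) - 1)) ≤ -1 - 1 / ((p:ℝ) - 1) := min_le_right _ _
    have hms : -1 - 1 / ((p:ℝ) - 1) ≤ -1 := by
      have h01 : 0 < 1 / ((p:ℝ) - 1) := div_pos one_pos (by linarith)
      linarith
    linarith

end Stmt11
end

section
/- Let p be a prime, L a complete extension of ℚ_p, and r, s ∈ ℝ_{≥0}. If f ∈ R⁺_r and g ∈ R⁺_s, then the product fg lies in R⁺_{r+s}. -/
namespace Stmt12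

open Filter PowerSeries

open scoped Classical

/-- The valuation `v_p(x) = -log_p ‖x‖` of `L` extending the `p`-adic valuation,
with value `⊤` at `0`. -/
noncomputable def vp (p : ℕ) {L : Type*} [NormedField L] (x : L) : EReal :=
  if x = 0 then ⊤ else ((-Real.logb p ‖x‖ : ℝ) : EReal)

/-- `u_h = 1 / (p^h (p - 1))`. -/
noncomputable def u (p : ℕ) (h : ℕ) : ℝ := 1 / ((p : ℝ) ^ h * ((p : ℝ) - 1))

/-- The Gauss valuation `v_h(f) = inf_k (v_p(a_k) + k u_h)` of `f = ∑ a_k X^k ∈ L[[X]]`. -/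
noncomputable def vh (p : ℕ) {L : Type*} [NormedField L] (f : PowerSeries L) (h : ℕ) :
    EReal :=
  ⨅ k : ℕ, vp p ((PowerSeries.coeff k) f) + (((k : ℝ) * u p h : ℝ) : EReal)

/-- `ℓ(n) = min {m : n < p^m}`. -/
noncomputable def ell (p n : ℕ) : ℕ := sInf {m : ℕ | n < p ^ m}

/-- `R⁺_r`: the set of `f = ∑ a_n X^n ∈ L[[X]]` such that `v_p(a_n) + r ℓ(n)` is
bounded below. -/
def Rplus (p : ℕ) (L : Type*) [NormedField L] (r : ℝ) : Set (PowerSeries L) :=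
  {f | ∃ B : ℝ, ∀ k : ℕ, (PowerSeries.coeff k) f ≠ 0 →
    B ≤ -Real.logb p ‖(PowerSeries.coeff k) f‖ + r * (ell p k)}

/-- Let `p` be a prime, `L` a complete (ultrametric) extension of
`ℚ_p`, and `r, s ≥ 0`.  If `f ∈ R⁺_r` and `g ∈ R⁺_s` then `f g ∈ R⁺_{r+s}`. -/
theorem Rplus_mul
    (p : ℕ) [Fact p.Prime] (L : Type*) [NormedField L] [NormedAlgebra ℚ_[p] L]
    [CompleteSpace L] [IsUltrametricDist L]
    (r s : ℝ) (hr : 0 ≤ r) (hs : 0 ≤ s)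
    (f g : PowerSeries L) (hf : f ∈ Rplus p L r) (hg : g ∈ Rplus p L s) :
    f * g ∈ Rplus p L (r + s) := by
  obtain ⟨Bf, hBf⟩ := hf
  obtain ⟨Bg, hBg⟩ := hg
  have hp1 : 1 < p := (Fact.out : p.Prime).one_lt
  have hp1R : (1 : ℝ) < p := by exact_mod_cast hp1
  -- monotonicity of ℓ
  have hell : ∀ i k : ℕ, i ≤ k → ell p i ≤ ell p k := by
    intro i k hik
    have hne : (ell p k) ∈ {m : ℕ | k < p ^ m} :=
      Nat.sInf_mem ⟨k, Nat.lt_pow_self hp1⟩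
    exact Nat.sInf_le (lt_of_le_of_lt hik hne)
  refine ⟨Bf + Bg, fun k hk => ?_⟩
  rw [PowerSeries.coeff_mul] at hk ⊢
  obtain ⟨⟨i, j⟩, hmem, hle⟩ :=
    IsUltrametricDist.exists_norm_finset_sum_le_of_nonempty
      (t := Finset.HasAntidiagonal.antidiagonal k) ⟨(0, k), by simp⟩
      (fun q => (PowerSeries.coeff q.1) f * (PowerSeries.coeff q.2) g)
  have hij : i + j = k := Finset.HasAntidiagonal.mem_antidiagonal.mp hmem
  have hpos : 0 < ‖∑ q ∈ Finset.HasAntidiagonal.antidiagonal k,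
      (PowerSeries.coeff q.1) f * (PowerSeries.coeff q.2) g‖ :=
    norm_pos_iff.mpr hk
  have hterm : (0 : ℝ) < ‖(PowerSeries.coeff i) f * (PowerSeries.coeff j) g‖ :=
    lt_of_lt_of_le hpos hle
  have hfi : (PowerSeries.coeff i) f ≠ 0 := by
    intro h; rw [h, zero_mul, norm_zero] at hterm; exact lt_irrefl 0 hterm
  have hgj : (PowerSeries.coeff j) g ≠ 0 := by
    intro h; rw [h, mul_zero, norm_zero] at hterm; exact lt_irrefl 0 hterm
  have hlog : Real.logb p ‖∑ q ∈ Finset.HasAntidiagonal.antidiagonal k,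
        (PowerSeries.coeff q.1) f * (PowerSeries.coeff q.2) g‖ ≤
      Real.logb p ‖(PowerSeries.coeff i) f‖ + Real.logb p ‖(PowerSeries.coeff j) g‖ := by
    rw [← Real.logb_mul (norm_ne_zero_iff.mpr hfi) (norm_ne_zero_iff.mpr hgj),
      ← norm_mul]
    exact Real.logb_le_logb_of_le hp1R hpos hle
  have h1 := hBf i hfi
  have h2 := hBg j hgj
  have hei : r * (ell p i : ℝ) ≤ r * (ell p k : ℝ) := by
    apply mul_le_mul_of_nonneg_left _ hr
    exact_mod_cast hell i k (hij ▸ Nat.le_add_right i j)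
  have hej : s * (ell p j : ℝ) ≤ s * (ell p k : ℝ) := by
    apply mul_le_mul_of_nonneg_left _ hs
    exact_mod_cast hell j k (hij ▸ Nat.le_add_left j i)
  have : Bf + Bg ≤ (-Real.logb p ‖(PowerSeries.coeff i) f‖
      - Real.logb p ‖(PowerSeries.coeff j) g‖) + (r + s) * (ell p k : ℝ) := by
    nlinarith [h1, h2, hei, hej]
  refine this.trans ?_
  have := neg_le_neg hlog
  linarith

end Stmt12
end
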